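/- arXiv:1905.01736 — 10 statements merged into one kernel-verified Lean document; each statement's English description precedes it below -/
import Mathlib

section
/- Let Q be a real p×p matrix with nonnegative off-diagonal entries and Q·𝟏 = 0 (𝟏 the all-ones column vector), and suppose the kernel of Q (acting on column vectors) is exactly the span of 𝟏. Let π be a row vector with strictly positive entries, π·𝟏 = 1 and π·Q = 0. Let J = 𝟏·π be the rank-one matrix whose rows all equal π, and assume J − Q is invertible. Then for every diagonal matrix D with nonnegative diagonal entries, π·D·((J − Q)⁻¹ − J)·D·𝟏 ≥ 0. -/
open Matrix Finset

/-- Dirichlet form nonnegativity: for a generator-like `Q` (nonneg off-diagonal, zero row sums)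
with positive stationary `π` (zero column sums of `ΠQ`), `-gᵀ Π Q g ≥ 0`. -/
lemma dirichlet_nonneg {p : ℕ} (Q : Matrix (Fin p) (Fin p) ℝ)
    (hQoff : ∀ i j, i ≠ j → 0 ≤ Q i j)
    (hQ1 : Q *ᵥ (1 : Fin p → ℝ) = 0)
    (π : Fin p → ℝ) (hπpos : ∀ i, 0 < π i)
    (hπQ : π ᵥ* Q = 0) (g : Fin p → ℝ) :
    0 ≤ -(∑ i, π i * g i * (Q *ᵥ g) i) := by
  have hrow : ∀ i, ∑ j, Q i j = 0 := by
    intro i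
    have := congrFun hQ1 i
    simpa [Matrix.mulVec, dotProduct] using this
  have hcol : ∀ j, ∑ i, π i * Q i j = 0 := by
    intro j
    have := congrFun hπQ j
    simpa [Matrix.vecMul, dotProduct] using this
  have key : ∑ i, ∑ j, π i * Q i j * (g i - g j) ^ 2
      = -2 * ∑ i, π i * g i * (Q *ᵥ g) i := by
    have e1 : ∑ i, ∑ j, π i * Q i j * g i ^ 2 = 0 := by
      refine Finset.sum_eq_zero fun i _ => ?_
      rw [← Finset.sum_mul]
      have : ∑ j, π i * Q i j = π i * ∑ j, Q i j := by rw [Finset.mul_sum]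
      rw [this, hrow i]; ring
    have e2 : ∑ i, ∑ j, π i * Q i j * g j ^ 2 = 0 := by
      rw [Finset.sum_comm]
      refine Finset.sum_eq_zero fun j _ => ?_
      have : ∑ i, π i * Q i j * g j ^ 2 = (∑ i, π i * Q i j) * g j ^ 2 := by
        rw [Finset.sum_mul]
      rw [this, hcol j]; ring
    have e3 : ∑ i, ∑ j, π i * Q i j * (g i * g j)
        = ∑ i, π i * g i * (Q *ᵥ g) i := by
      refine Finset.sum_congr rfl fun i _ => ?_
      simp only [Matrix.mulVec, dotProduct, Finset.mul_sum]
      refine Finset.sum_congr rfl fun j _ => ?_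
      ring
    calc ∑ i, ∑ j, π i * Q i j * (g i - g j) ^ 2
        = ∑ i, ∑ j, (π i * Q i j * g i ^ 2 + π i * Q i j * g j ^ 2
            - 2 * (π i * Q i j * (g i * g j))) := by
          refine Finset.sum_congr rfl fun i _ => Finset.sum_congr rfl fun j _ => ?_
          ring
      _ = (∑ i, ∑ j, π i * Q i j * g i ^ 2) + (∑ i, ∑ j, π i * Q i j * g j ^ 2)
            - 2 * ∑ i, ∑ j, π i * Q i j * (g i * g j) := by
          simp [Finset.sum_add_distrib, Finset.sum_sub_distrib, Finset.mul_sum]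
      _ = -2 * ∑ i, π i * g i * (Q *ᵥ g) i := by rw [e1, e2, e3]; ring
  have hnn : 0 ≤ ∑ i, ∑ j, π i * Q i j * (g i - g j) ^ 2 := by
    refine Finset.sum_nonneg fun i _ => Finset.sum_nonneg fun j _ => ?_
    rcases eq_or_ne i j with rfl | hij
    · simp
    · exact mul_nonneg (mul_nonneg (hπpos i).le (hQoff i j hij)) (sq_nonneg _)
  nlinarith [hnn, key]

/-- For an irreducible-generator-like matrix `Q` (nonnegative off-diagonal
entries, `Q·𝟏 = 0`, kernel exactly the span of `𝟏`) with positive stationary row vector `π`,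
`J = 𝟏·π`, `J − Q` invertible: for every nonnegative diagonal matrix `D`,
`π·D·((J − Q)⁻¹ − J)·D·𝟏 ≥ 0`. -/
theorem stmt_3 {p : ℕ} (Q : Matrix (Fin p) (Fin p) ℝ)
    (hQoff : ∀ i j, i ≠ j → 0 ≤ Q i j)
    (hQ1 : Q *ᵥ (1 : Fin p → ℝ) = 0)
    (hker : ∀ v : Fin p → ℝ, Q *ᵥ v = 0 → ∃ c : ℝ, v = c • (1 : Fin p → ℝ))
    (π : Fin p → ℝ) (hπpos : ∀ i, 0 < π i)
    (hπ1 : π ⬝ᵥ (1 : Fin p → ℝ) = 1) (hπQ : π ᵥ* Q = 0)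
    (J : Matrix (Fin p) (Fin p) ℝ) (hJ : J = Matrix.of fun _ j => π j)
    (hJQ : IsUnit (J - Q).det)
    (D : Matrix (Fin p) (Fin p) ℝ)
    (hDdiag : ∀ i j, i ≠ j → D i j = 0) (hDnonneg : ∀ i, 0 ≤ D i i) :
    0 ≤ (π ᵥ* (D * ((J - Q)⁻¹ - J) * D)) ⬝ᵥ (1 : Fin p → ℝ) := by
  classical
  set M : Matrix (Fin p) (Fin p) ℝ := J - Q with hMdef
  set S : Matrix (Fin p) (Fin p) ℝ := M⁻¹ - J with hSdef
  have hπsum : ∑ i, π i = 1 := by simpa [dotProduct] using hπ1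
  have hMM : M * M⁻¹ = 1 := Matrix.mul_nonsing_inv M hJQ
  -- basic identities
  have hJJ : J * J = J := by
    subst hJ; ext i j
    simp only [Matrix.mul_apply, Matrix.of_apply]
    rw [← Finset.sum_mul, hπsum, one_mul]
  have hJQ0 : J * Q = 0 := by
    subst hJ; ext i j
    have := congrFun hπQ j
    simpa [Matrix.mul_apply, Matrix.vecMul, dotProduct] using this
  have hπJ : π ᵥ* J = π := by
    subst hJ; ext j
    simp only [Matrix.vecMul, dotProduct, Matrix.of_apply]
    rw [← Finset.sum_mul, hπsum, one_mul]
  have hπM : π ᵥ* M = π := by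
    rw [hMdef, Matrix.vecMul_sub, hπJ, hπQ, sub_zero]
  have hπMi : π ᵥ* M⁻¹ = π := by
    calc π ᵥ* M⁻¹ = (π ᵥ* M) ᵥ* M⁻¹ := by rw [hπM]
      _ = π ᵥ* (M * M⁻¹) := by rw [Matrix.vecMul_vecMul]
      _ = π := by rw [hMM, Matrix.vecMul_one]
  have hπS : π ᵥ* S = 0 := by
    rw [hSdef, Matrix.vecMul_sub, hπMi, hπJ, sub_self]
  have hJM : J * M = J := by
    rw [hMdef, Matrix.mul_sub, hJJ, hJQ0, sub_zero]
  have hJMi : J * M⁻¹ = J := by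
    calc J * M⁻¹ = (J * M) * M⁻¹ := by rw [hJM]
      _ = J * (M * M⁻¹) := by rw [Matrix.mul_assoc]
      _ = J := by rw [hMM, Matrix.mul_one]
  have hQMi : Q * M⁻¹ = J - 1 := by
    have hQ : Q = J - M := by rw [hMdef]; abel
    rw [hQ, Matrix.sub_mul, hJMi, hMM]
  have hQJ0 : Q * J = 0 := by
    subst hJ; ext i j
    have := congrFun hQ1 i
    simp only [Matrix.mulVec, dotProduct, Pi.one_apply, mul_one, Pi.zero_apply] at this
    simp only [Matrix.mul_apply, Matrix.of_apply, Matrix.zero_apply]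
    rw [← Finset.sum_mul, this, zero_mul]
  have hQS : Q * S = J - 1 := by
    rw [hSdef, Matrix.mul_sub, hQMi, hQJ0, sub_zero]
  -- now vector computations
  set f : Fin p → ℝ := fun i => D i i with hfdef
  have hDdiagonal : D = Matrix.diagonal f := by
    ext i j
    rcases eq_or_ne i j with rfl | hij
    · simp [Matrix.diagonal, hfdef]
    · simp [Matrix.diagonal, hij, hDdiag i j hij]
  set g : Fin p → ℝ := S *ᵥ f with hgdef
  -- π ⬝ᵥ g = 0
  have hπg : π ⬝ᵥ g = 0 := by
    rw [hgdef, Matrix.dotProduct_mulVec, hπS, zero_dotProduct]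
  -- Q *ᵥ g = (π ⬝ᵥ f) • 1 - f
  have hJf : J *ᵥ f = fun _ => π ⬝ᵥ f := by
    subst hJ; ext i
    simp [Matrix.mulVec, dotProduct]
  have hQg : Q *ᵥ g = (fun i => π ⬝ᵥ f - f i) := by
    rw [hgdef, Matrix.mulVec_mulVec, hQS]
    ext i
    simp only [Matrix.sub_mulVec, Matrix.one_mulVec, Pi.sub_apply]
    rw [congrFun hJf i]
  -- rewrite the goal as ∑ i, π i * f i * g i
  have hD1 : D *ᵥ (1 : Fin p → ℝ) = f := by
    rw [hDdiagonal]; ext i; simp [Matrix.mulVec_diagonal]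
  have hgoal : (π ᵥ* (D * S * D)) ⬝ᵥ (1 : Fin p → ℝ) = ∑ i, π i * f i * g i := by
    rw [← Matrix.dotProduct_mulVec, ← Matrix.mulVec_mulVec, hD1, ← Matrix.mulVec_mulVec, ← hgdef,
      hDdiagonal]
    simp only [dotProduct, Matrix.mulVec_diagonal]
    exact Finset.sum_congr rfl fun i _ => by ring
  rw [hgoal]
  -- value = - ∑ π i g i (Qg) i + (π⬝ᵥf)(π⬝ᵥg)
  have hval : ∑ i, π i * f i * g i = -(∑ i, π i * g i * (Q *ᵥ g) i) := by
    have : ∀ i, f i = π ⬝ᵥ f - (Q *ᵥ g) i := by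
      intro i; rw [hQg]; ring
    calc ∑ i, π i * f i * g i
        = ∑ i, (π ⬝ᵥ f * (π i * g i) - π i * g i * (Q *ᵥ g) i) := by
          refine Finset.sum_congr rfl fun i _ => ?_
          rw [this i]; ring
      _ = π ⬝ᵥ f * (∑ i, π i * g i) - ∑ i, π i * g i * (Q *ᵥ g) i := by
          rw [Finset.sum_sub_distrib, Finset.mul_sum]
      _ = -(∑ i, π i * g i * (Q *ᵥ g) i) := by
          have : ∑ i, π i * g i = 0 := by simpa [dotProduct] using hπg
          rw [this]; ring
  rw [hval]
  exact dirichlet_nonneg Q hQoff hQ1 π hπpos hπQ g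
end

section
/- Let Q be a real p×p matrix with nonnegative off-diagonal entries and Q·𝟏 = 0, with kernel of Q equal to the span of 𝟏. Let π be a row vector with strictly positive entries, π·𝟏 = 1, π·Q = 0, let J = 𝟏·π, and assume J − Q is invertible. Let C be a diagonal matrix with nonpositive diagonal entries such that D := Q − C has nonnegative entries. Then π·D·((J − Q)⁻¹ − J)·D·𝟏 ≥ 0. -/
open Matrix

/-- As in STATEMENT 3, but for the MSPP case: `C` diagonal with nonpositive
diagonal entries and `D := Q − C` with nonnegative entries. Then
`π·D·((J − Q)⁻¹ − J)·D·𝟏 ≥ 0`. -/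
theorem stmt_4 {p : ℕ} (Q : Matrix (Fin p) (Fin p) ℝ)
    (hQoff : ∀ i j, i ≠ j → 0 ≤ Q i j)
    (hQ1 : Q *ᵥ (1 : Fin p → ℝ) = 0)
    (hker : ∀ v : Fin p → ℝ, Q *ᵥ v = 0 → ∃ c : ℝ, v = c • (1 : Fin p → ℝ))
    (π : Fin p → ℝ) (hπpos : ∀ i, 0 < π i)
    (hπ1 : π ⬝ᵥ (1 : Fin p → ℝ) = 1) (hπQ : π ᵥ* Q = 0)
    (J : Matrix (Fin p) (Fin p) ℝ) (hJ : J = Matrix.of fun _ j => π j)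
    (hJQ : IsUnit (J - Q).det)
    (C : Matrix (Fin p) (Fin p) ℝ)
    (hCdiag : ∀ i j, i ≠ j → C i j = 0) (hCnonpos : ∀ i, C i i ≤ 0)
    (hDnonneg : ∀ i j, 0 ≤ (Q - C) i j) :
    0 ≤ (π ᵥ* ((Q - C) * ((J - Q)⁻¹ - J) * (Q - C))) ⬝ᵥ (1 : Fin p → ℝ) := by
  set A := J - Q with hA
  set M := A⁻¹ - J with hM
  set D := Q - C with hD
  have hsum : ∑ i, π i = 1 := by simpa [dotProduct] using hπ1
  have hQrow : ∀ i, ∑ k, Q i k = 0 := by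
    intro i
    have := congrFun hQ1 i
    simpa [mulVec, dotProduct] using this
  have hQcol : ∀ k, ∑ i, π i * Q i k = 0 := by
    intro k
    have := congrFun hπQ k
    simpa [vecMul, dotProduct] using this
  have hπJ : π ᵥ* J = π := by
    ext j
    simp [vecMul, dotProduct, hJ, ← Finset.sum_mul, hsum]
  have hπA : π ᵥ* A = π := by
    simp [hA, vecMul_sub, hπJ, hπQ]
  have hπAinv : π ᵥ* A⁻¹ = π := by
    conv_lhs => rw [← hπA]
    rw [vecMul_vecMul, mul_nonsing_inv _ hJQ, vecMul_one]
  have hπM : π ᵥ* M = 0 := by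
    simp [hM, vecMul_sub, hπAinv, hπJ]
  have hQJ : Q * J = 0 := by
    ext i j
    simp [mul_apply, hJ, ← Finset.sum_mul, hQrow]
  have hJJ : J * J = J := by
    ext i j
    simp [mul_apply, hJ, ← Finset.sum_mul, hsum]
  have hAM : A * M = 1 - J := by
    rw [hM, Matrix.mul_sub, mul_nonsing_inv _ hJQ, hA, Matrix.sub_mul, hJJ, hQJ, sub_zero]
  set lam := D *ᵥ (1 : Fin p → ℝ) with hlamdef
  set g := M *ᵥ lam with hgdef
  set c := π ⬝ᵥ lam with hcdef
  have hπg : π ⬝ᵥ g = 0 := by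
    rw [hgdef, dotProduct_mulVec, hπM, zero_dotProduct]
  have hJg : J *ᵥ g = 0 := by
    ext i
    have : (J *ᵥ g) i = π ⬝ᵥ g := by
      simp [mulVec, dotProduct, hJ]
    simp [this, hπg]
  have hJlam : J *ᵥ lam = c • (1 : Fin p → ℝ) := by
    ext i
    simp [mulVec, dotProduct, hJ, hcdef, smul_eq_mul]
  have hAg : A *ᵥ g = lam - c • (1 : Fin p → ℝ) := by
    rw [hgdef, mulVec_mulVec, hAM, Matrix.sub_mulVec, one_mulVec, hJlam]
  have hQg : Q *ᵥ g = c • (1 : Fin p → ℝ) - lam := by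
    have h1 : A *ᵥ g = J *ᵥ g - Q *ᵥ g := by rw [hA, Matrix.sub_mulVec]
    rw [hJg] at h1
    have := hAg
    rw [h1] at this
    linear_combination (norm := module) -this
  have hπD : π ᵥ* D = fun j => π j * lam j := by
    ext j
    have hπC : ∑ i, π i * C i j = π j * C j j := by
      rw [Finset.sum_eq_single j]
      · intro i _ hij
        rw [hCdiag i j hij, mul_zero]
      · intro h; exact absurd (Finset.mem_univ j) h
    have hlamj : lam j = -(C j j) := by
      have hCj : ∑ k, C j k = C j j := by
        rw [Finset.sum_eq_single j]
        · intro k _ hkj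
          exact hCdiag j k (Ne.symm hkj)
        · intro h; exact absurd (Finset.mem_univ j) h
      simp [hlamdef, hD, mulVec, dotProduct, Matrix.sub_apply, Finset.sum_sub_distrib,
        hQrow, hCj]
    have hv : (π ᵥ* D) j = ∑ i, (π i * Q i j - π i * C i j) := by
      simp [vecMul, dotProduct, hD, Matrix.sub_apply, mul_sub]
    rw [hv, Finset.sum_sub_distrib, hQcol, hπC, hlamj]
    ring
  -- rewrite the goal
  have hgoal : (π ᵥ* (D * M * D)) ⬝ᵥ (1 : Fin p → ℝ)
      = ∑ j, π j * lam j * g j := by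
    rw [← dotProduct_mulVec, ← mulVec_mulVec, ← mulVec_mulVec, ← hlamdef, ← hgdef,
      dotProduct_mulVec, hπD]
    simp [dotProduct]
  rw [hgoal]
  -- express the sum via the Dirichlet form
  have hlamj : ∀ j, lam j = c - (Q *ᵥ g) j := by
    intro j
    have := congrFun hQg j
    simp [smul_eq_mul] at this
    linarith [this]
  have hsplit : ∑ j, π j * lam j * g j
      = c * (∑ j, π j * g j) - ∑ j, π j * (Q *ᵥ g) j * g j := by
    rw [Finset.mul_sum, ← Finset.sum_sub_distrib]
    apply Finset.sum_congr rfl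
    intro j _
    rw [hlamj j]; ring
  have hπgsum : ∑ j, π j * g j = 0 := by simpa [dotProduct] using hπg
  have hS : ∑ j, π j * (Q *ᵥ g) j * g j = ∑ j, ∑ k, π j * Q j k * g j * g k := by
    apply Finset.sum_congr rfl
    intro j _
    simp [mulVec, dotProduct, Finset.sum_mul, Finset.mul_sum]
    apply Finset.sum_congr rfl
    intro k _
    ring
  -- Dirichlet form nonnegativity
  have hT : 0 ≤ ∑ j, ∑ k, π j * Q j k * (g j - g k) ^ 2 := by
    apply Finset.sum_nonneg
    intro j _
    apply Finset.sum_nonneg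
    intro k _
    rcases eq_or_ne j k with rfl | hjk
    · simp
    · exact mul_nonneg (mul_nonneg (hπpos j).le (hQoff j k hjk)) (sq_nonneg _)
  have hexp : ∑ j, ∑ k, π j * Q j k * (g j - g k) ^ 2
      = -2 * ∑ j, ∑ k, π j * Q j k * g j * g k := by
    have e1 : ∑ j, ∑ k, π j * Q j k * g j ^ 2 = 0 := by
      apply Finset.sum_eq_zero
      intro j _
      have : ∑ k, π j * Q j k * g j ^ 2 = (π j * g j ^ 2) * ∑ k, Q j k := by
        rw [Finset.mul_sum]
        apply Finset.sum_congr rfl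
        intro k _
        ring
      rw [this, hQrow, mul_zero]
    have e3 : ∑ j, ∑ k, π j * Q j k * g k ^ 2 = 0 := by
      rw [Finset.sum_comm]
      apply Finset.sum_eq_zero
      intro k _
      have : ∑ j, π j * Q j k * g k ^ 2 = (∑ j, π j * Q j k) * g k ^ 2 := by
        rw [Finset.sum_mul]
      rw [this, hQcol, zero_mul]
    have expand : ∑ j, ∑ k, π j * Q j k * (g j - g k) ^ 2
        = (∑ j, ∑ k, π j * Q j k * g j ^ 2)
          - 2 * (∑ j, ∑ k, π j * Q j k * g j * g k)
          + ∑ j, ∑ k, π j * Q j k * g k ^ 2 := by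
      have h : ∀ j k, π j * Q j k * (g j - g k) ^ 2
          = π j * Q j k * g j ^ 2 - 2 * (π j * Q j k * g j * g k)
            + π j * Q j k * g k ^ 2 := by intros; ring
      simp_rw [h, Finset.sum_add_distrib, Finset.sum_sub_distrib, ← Finset.mul_sum]
    rw [expand, e1, e3]
    ring
  rw [hsplit, hπgsum, mul_zero, zero_sub, hS]
  nlinarith [hT, hexp]
end

section
/- Let α : Fin p → ℝ be a probability vector (αᵢ ≥ 0, Σᵢ αᵢ = 1) and c : Fin p → ℝ with cᵢ ≥ 0 for all i. Then the hazard-rate function h(t) = (Σᵢ αᵢ·cᵢ·exp(−cᵢ·t)) / (Σᵢ αᵢ·exp(−cᵢ·t)) is antitone (non-increasing) on [0, ∞). -/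
/-- Weighted Chebyshev-type inequality for antivarying `f`, `g`. -/
lemma key_cheb {p : ℕ} (w f g : Fin p → ℝ) (hw : ∀ i, 0 ≤ w i)
    (hfg : ∀ i j, (f i - f j) * (g i - g j) ≤ 0) :
    (∑ i, w i * (f i * g i)) * (∑ j, w j) ≤ (∑ i, w i * f i) * (∑ j, w j * g j) := by
  have key : 0 ≤ ∑ i, ∑ j, (w i * f i * (w j * g j) - w i * (f i * g i) * w j) := by
    set A : Fin p → Fin p → ℝ :=
      fun i j => w i * f i * (w j * g j) - w i * (f i * g i) * w j with hA
    have hc1 : (∑ i, ∑ j, A i j) = ∑ i, ∑ j, A j i := Finset.sum_comm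
    have hsymm : (∑ i, ∑ j, A i j)
        = (1/2) * ∑ i : Fin p, ∑ j : Fin p, (A i j + A j i) := by
      simp_rw [Finset.sum_add_distrib]
      rw [← hc1]; ring
    rw [hsymm]
    apply mul_nonneg (by norm_num)
    apply Finset.sum_nonneg; intro i _
    apply Finset.sum_nonneg; intro j _
    have h1 : A i j + A j i
        = w i * w j * (-((f i - f j) * (g i - g j))) := by simp [A]; ring
    rw [h1]
    exact mul_nonneg (mul_nonneg (hw i) (hw j)) (neg_nonneg.mpr (hfg i j))
  have expand : ∀ a b : Fin p → ℝ, (∑ i, a i) * (∑ j, b j) = ∑ i, ∑ j, a i * b j := by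
    intro a b
    rw [Finset.sum_mul]
    congr 1; ext i; rw [Finset.mul_sum]
  have h2 := key
  rw [show (∑ i : Fin p, ∑ j : Fin p, (w i * f i * (w j * g j) - w i * (f i * g i) * w j))
      = (∑ i, ∑ j, w i * f i * (w j * g j)) - (∑ i, ∑ j, w i * (f i * g i) * w j) by
    rw [← Finset.sum_sub_distrib]; congr 1; ext i; rw [← Finset.sum_sub_distrib]] at h2
  rw [← expand, ← expand] at h2
  linarith

/-- For a probability vector `α` and nonnegative rates `c`, the hazard rate
`h(t) = (Σᵢ αᵢ·cᵢ·e^{−cᵢt}) / (Σᵢ αᵢ·e^{−cᵢt})` is non-increasing on `[0, ∞)`. -/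
theorem stmt_5 {p : ℕ} (α c : Fin p → ℝ)
    (hα_nonneg : ∀ i, 0 ≤ α i) (hα_sum : ∑ i, α i = 1)
    (hc : ∀ i, 0 ≤ c i) :
    AntitoneOn
      (fun t => (∑ i, α i * c i * Real.exp (-(c i) * t)) /
        (∑ i, α i * Real.exp (-(c i) * t)))
      (Set.Ici (0 : ℝ)) := by
  -- the denominator is positive
  have hden : ∀ u : ℝ, 0 < ∑ i, α i * Real.exp (-(c i) * u) := by
    intro u
    obtain ⟨i, hi⟩ : ∃ i, 0 < α i := by
      by_contra h
      push_neg at h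
      have : ∑ i, α i = 0 := Finset.sum_eq_zero fun i _ => le_antisymm (h i) (hα_nonneg i)
      rw [hα_sum] at this; norm_num at this
    apply Finset.sum_pos' (fun j _ => mul_nonneg (hα_nonneg j) (Real.exp_pos _).le)
    exact ⟨i, Finset.mem_univ i, mul_pos hi (Real.exp_pos _)⟩
  intro s hs t ht hst
  simp only
  rw [div_le_div_iff₀ (hden t) (hden s)]
  -- apply the Chebyshev inequality with w i = α i * e^{-c i * s}, f = c, g i = e^{-c i (t-s)}
  have hkey := key_cheb (fun i => α i * Real.exp (-(c i) * s)) c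
      (fun i => Real.exp (-(c i) * (t - s)))
      (fun i => mul_nonneg (hα_nonneg i) (Real.exp_pos _).le)
      (by
        intro i j
        rcases le_total (c i) (c j) with h | h
        · apply mul_nonpos_of_nonpos_of_nonneg (by linarith)
          have : -(c j) * (t - s) ≤ -(c i) * (t - s) := by nlinarith
          simpa using Real.exp_le_exp.mpr this
        · apply mul_nonpos_of_nonneg_of_nonpos (by linarith)
          have : -(c i) * (t - s) ≤ -(c j) * (t - s) := by nlinarith
          simpa using Real.exp_le_exp.mpr this)
  have hrw : ∀ i, Real.exp (-(c i) * s) * Real.exp (-(c i) * (t - s))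
      = Real.exp (-(c i) * t) := by
    intro i; rw [← Real.exp_add]; ring_nf
  have e1 : (∑ i, (fun i => α i * Real.exp (-(c i) * s)) i * (c i * Real.exp (-(c i) * (t - s))))
      = ∑ i, α i * c i * Real.exp (-(c i) * t) := by
    congr 1; ext i; rw [← hrw i]; ring
  have e2 : (∑ i, (fun i => α i * Real.exp (-(c i) * s)) i * Real.exp (-(c i) * (t - s)))
      = ∑ i, α i * Real.exp (-(c i) * t) := by
    congr 1; ext i; rw [← hrw i]; ring
  have e3 : (∑ i, (fun i => α i * Real.exp (-(c i) * s)) i * c i)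
      = ∑ i, α i * c i * Real.exp (-(c i) * s) := by
    congr 1; ext i; ring
  simp only at e1 e2 e3 hkey
  rw [e1, e2, e3] at hkey
  simpa [mul_comm] using hkey
end

section
/- Let π : Fin p → ℝ be a probability vector (πᵢ ≥ 0, Σᵢ πᵢ = 1) and c : Fin p → ℝ with cᵢ > 0 for all i. Set λ* = Σⱼ πⱼ·cⱼ and define αᵢ = πᵢ·cᵢ/λ*. Then for every t ≥ 0: Σᵢ πᵢ·exp(−cᵢ·t) ≥ Σᵢ αᵢ·exp(−cᵢ·t). -/
/-- For a probability vector `π` and positive rates `c`, with `λ* = Σⱼ πⱼcⱼ`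
and `αᵢ = πᵢcᵢ/λ*`, for every `t ≥ 0`: `Σᵢ πᵢe^{−cᵢt} ≥ Σᵢ αᵢe^{−cᵢt}`. -/
theorem stmt_7 {p : ℕ} (π c : Fin p → ℝ)
    (hπ_nonneg : ∀ i, 0 ≤ π i) (hπ_sum : ∑ i, π i = 1)
    (hc : ∀ i, 0 < c i) (t : ℝ) (ht : 0 ≤ t) :
    ∑ i, π i * Real.exp (-(c i) * t) ≥
      ∑ i, (π i * c i / (∑ j, π j * c j)) * Real.exp (-(c i) * t) := by
  set f : Fin p → ℝ := fun i => Real.exp (-(c i) * t) with hf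
  have hS : 0 < ∑ j, π j * c j := by
    have hex : ∃ i, 0 < π i := by
      by_contra h
      push_neg at h
      have h1 : ∑ i, π i ≤ 0 := Finset.sum_nonpos fun i _ => h i
      rw [hπ_sum] at h1; linarith
    obtain ⟨i, hi⟩ := hex
    exact Finset.sum_pos' (fun j _ => mul_nonneg (hπ_nonneg j) (hc j).le)
      ⟨i, Finset.mem_univ i, mul_pos hi (hc i)⟩
  -- antitone: if c i ≤ c j then f j ≤ f i
  have hanti : ∀ i j, c i ≤ c j → f j ≤ f i := by
    intro i j h
    exact Real.exp_le_exp.2 (by nlinarith)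
  have hterm : ∀ i j, 0 ≤ π i * π j * ((f i - f j) * (c j - c i)) := by
    intro i j
    apply mul_nonneg (mul_nonneg (hπ_nonneg i) (hπ_nonneg j))
    rcases le_total (c i) (c j) with h | h
    · exact mul_nonneg (sub_nonneg.2 (hanti i j h)) (sub_nonneg.2 h)
    · exact mul_nonneg_iff.2 (Or.inr ⟨sub_nonpos.2 (hanti j i h), sub_nonpos.2 h⟩)
  have expand : ∀ i j : Fin p, π i * π j * ((f i - f j) * (c j - c i)) =
      (π i * f i) * (π j * c j) + (π j * f j) * (π i * c i)
        - (π i * c i * f i) * (π j) - (π j * c j * f j) * (π i) := by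
    intro i j; ring
  have key : (0:ℝ) ≤ 2 * ((∑ i, π i * f i) * (∑ j, π j * c j))
      - 2 * ((∑ i, π i * c i * f i) * (∑ j, π j)) := by
    have h0 : (0:ℝ) ≤ ∑ i, ∑ j, π i * π j * ((f i - f j) * (c j - c i)) :=
      Finset.sum_nonneg fun i _ => Finset.sum_nonneg fun j _ => hterm i j
    have h1 : ∑ i, ∑ j, π i * π j * ((f i - f j) * (c j - c i)) =
        2 * ((∑ i, π i * f i) * (∑ j, π j * c j))
          - 2 * ((∑ i, π i * c i * f i) * (∑ j, π j)) := by
      simp_rw [expand, Finset.sum_sub_distrib, Finset.sum_add_distrib,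
        ← Finset.sum_mul, ← Finset.mul_sum]
      rw [Finset.sum_mul, Finset.sum_mul]
      ring
    linarith [h1 ▸ h0]
  have hmain : ∑ i, π i * c i * f i ≤ (∑ i, π i * f i) * (∑ j, π j * c j) := by
    rw [hπ_sum] at key; linarith
  have : ∑ i, (π i * c i / (∑ j, π j * c j)) * f i
      = (∑ i, π i * c i * f i) / (∑ j, π j * c j) := by
    rw [Finset.sum_div]; congr 1; ext i; ring
  rw [ge_iff_le, this, div_le_iff₀ hS]
  exact hmain
end

section
/- Let σ₁, σ₂ > 0 and λ₁, λ₂ ≥ 0 with λ₁σ₂ + λ₂σ₁ + λ₁λ₂ > 0. Let C be the 2×2 real matrix with rows (−σ₁−λ₁, σ₁) and (σ₂, −σ₂−λ₂), and let π = (σ₂/(σ₁+σ₂), σ₁/(σ₁+σ₂)). Then C is invertible and c² := 2·(π·C·𝟏)·(π·C⁻¹·𝟏) − 1 = 1 + 2σ₁σ₂(λ₁−λ₂)² / ((σ₁+σ₂)²·(λ₂σ₁ + λ₁λ₂ + λ₁σ₂)); in particular c² ≥ 1, with equality if and only if λ₁ = λ₂. -/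
open Matrix

/-- For an MMPP₂ with `C = !![−σ₁−lam₁, σ₁; σ₂, −σ₂−lam₂]` and
`π = (σ₂, σ₁)/(σ₁+σ₂)`, the matrix `C` is invertible and
`c² = 2·(π·C·𝟏)·(π·C⁻¹·𝟏) − 1 = 1 + 2σ₁σ₂(lam₁−lam₂)²/((σ₁+σ₂)²(lam₂σ₁+lam₁lam₂+lam₁σ₂))`;
in particular `c² ≥ 1` with equality iff `lam₁ = lam₂`. -/
theorem stmt_10 (σ₁ σ₂ lam₁ lam₂ : ℝ) (hσ₁ : 0 < σ₁) (hσ₂ : 0 < σ₂)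
    (hlam₁ : 0 ≤ lam₁) (hlam₂ : 0 ≤ lam₂) (hpos : 0 < lam₁ * σ₂ + lam₂ * σ₁ + lam₁ * lam₂)
    (C : Matrix (Fin 2) (Fin 2) ℝ) (hC : C = !![-σ₁ - lam₁, σ₁; σ₂, -σ₂ - lam₂])
    (π : Fin 2 → ℝ) (hπ : π = ![σ₂ / (σ₁ + σ₂), σ₁ / (σ₁ + σ₂)]) :
    IsUnit C.det ∧
      2 * ((π ᵥ* C) ⬝ᵥ (1 : Fin 2 → ℝ)) * ((π ᵥ* C⁻¹) ⬝ᵥ (1 : Fin 2 → ℝ)) - 1 =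
        1 + 2 * σ₁ * σ₂ * (lam₁ - lam₂) ^ 2 /
          ((σ₁ + σ₂) ^ 2 * (lam₂ * σ₁ + lam₁ * lam₂ + lam₁ * σ₂)) ∧
      1 ≤ 2 * ((π ᵥ* C) ⬝ᵥ (1 : Fin 2 → ℝ)) * ((π ᵥ* C⁻¹) ⬝ᵥ (1 : Fin 2 → ℝ)) - 1 ∧
      (2 * ((π ᵥ* C) ⬝ᵥ (1 : Fin 2 → ℝ)) * ((π ᵥ* C⁻¹) ⬝ᵥ (1 : Fin 2 → ℝ)) - 1 = 1 ↔
        lam₁ = lam₂) := by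
  have hdet : C.det = lam₁ * σ₂ + lam₂ * σ₁ + lam₁ * lam₂ := by
    subst hC; simp [Matrix.det_fin_two_of]; ring
  have hdne : C.det ≠ 0 := by rw [hdet]; exact hpos.ne'
  have hU : IsUnit C.det := hdne.isUnit
  have hσ : (0:ℝ) < σ₁ + σ₂ := by linarith
  have hden : (0:ℝ) < (σ₁ + σ₂) ^ 2 * (lam₂ * σ₁ + lam₁ * lam₂ + lam₁ * σ₂) := by
    apply mul_pos (pow_pos hσ 2); linarith
  have hinv : C⁻¹ = (lam₁ * σ₂ + lam₂ * σ₁ + lam₁ * lam₂)⁻¹ •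
      !![-σ₂ - lam₂, -σ₁; -σ₂, -σ₁ - lam₁] := by
    rw [Matrix.inv_def, Ring.inverse_eq_inv', hdet]
    congr 1
    subst hC
    simp [Matrix.adjugate_fin_two_of]
  have key : 2 * ((π ᵥ* C) ⬝ᵥ (1 : Fin 2 → ℝ)) * ((π ᵥ* C⁻¹) ⬝ᵥ (1 : Fin 2 → ℝ)) - 1 =
      1 + 2 * σ₁ * σ₂ * (lam₁ - lam₂) ^ 2 /
        ((σ₁ + σ₂) ^ 2 * (lam₂ * σ₁ + lam₁ * lam₂ + lam₁ * σ₂)) := by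
    rw [hinv]; subst hC hπ
    simp [Matrix.vecMul, dotProduct, Fin.sum_univ_two, Matrix.smul_apply]
    have hne2 : σ₂ * lam₁ + σ₁ * lam₂ + lam₁ * lam₂ ≠ 0 := ne_of_gt (by linarith)
    have hne3 : lam₂ * σ₁ + lam₁ * lam₂ + lam₁ * σ₂ ≠ 0 := ne_of_gt (by linarith)
    field_simp
    ring_nf
    field_simp
    ring
  refine ⟨hU, key, ?_, ?_⟩
  · rw [key]
    have : 0 ≤ 2 * σ₁ * σ₂ * (lam₁ - lam₂) ^ 2 /
        ((σ₁ + σ₂) ^ 2 * (lam₂ * σ₁ + lam₁ * lam₂ + lam₁ * σ₂)) := by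
      apply div_nonneg _ hden.le
      positivity
    linarith
  · rw [key]
    constructor
    · intro h
      have h2 : 2 * σ₁ * σ₂ * (lam₁ - lam₂) ^ 2 /
          ((σ₁ + σ₂) ^ 2 * (lam₂ * σ₁ + lam₁ * lam₂ + lam₁ * σ₂)) = 0 := by linarith
      have h3 : 2 * σ₁ * σ₂ * (lam₁ - lam₂) ^ 2 = 0 := by
        rcases div_eq_zero_iff.mp h2 with h | h
        · exact h
        · exact absurd h hden.ne'
      have h4 : (lam₁ - lam₂) ^ 2 = 0 := by
        have := mul_pos (mul_pos (by norm_num : (0:ℝ) < 2) hσ₁) hσ₂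
        rcases mul_eq_zero.mp h3 with h | h
        · exact absurd h this.ne'
        · exact h
      have := pow_eq_zero_iff (n := 2) (by norm_num) |>.mp h4
      linarith
    · intro h; subst h; simp
end

section
/- Let σ₁, σ₂ > 0 and λ₁, λ₂ ≥ 0 with λ₁σ₂ + λ₂σ₁ > 0. Let Q be the 2×2 matrix with rows (−σ₁, σ₁) and (σ₂, −σ₂), D = diag(λ₁, λ₂), π = (σ₂/(σ₁+σ₂), σ₁/(σ₁+σ₂)), λ* = π·D·𝟏, and J = 𝟏·π (the matrix whose rows both equal π). Then J − Q is invertible and d² := 1 + (2/λ*)·π·D·((J − Q)⁻¹ − J)·D·𝟏 = 1 + 2σ₁σ₂(λ₁−λ₂)² / ((σ₁+σ₂)²·(λ₁σ₂ + λ₂σ₁)); in particular d² ≥ 1, with equality if and only if λ₁ = λ₂. -/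
open Matrix

/-- For an MMPP₂ with generator `Q = !![−σ₁, σ₁; σ₂, −σ₂]`,
`D = diag(λ₁, λ₂)`, `π = (σ₂, σ₁)/(σ₁+σ₂)`, `λ* = π·D·𝟏`, `J = 𝟏·π`: the matrix `J − Q`
is invertible and `d² = 1 + (2/λ*)·π·D·((J−Q)⁻¹ − J)·D·𝟏
= 1 + 2σ₁σ₂(λ₁−λ₂)²/((σ₁+σ₂)²(λ₁σ₂+λ₂σ₁))`; in particular `d² ≥ 1` with equality iff
`λ₁ = λ₂`. -/
theorem stmt_11 (σ₁ σ₂ lam₁ lam₂ : ℝ) (hσ₁ : 0 < σ₁) (hσ₂ : 0 < σ₂)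
    (hlam₁ : 0 ≤ lam₁) (hlam₂ : 0 ≤ lam₂) (hpos : 0 < lam₁ * σ₂ + lam₂ * σ₁)
    (Q : Matrix (Fin 2) (Fin 2) ℝ) (hQ : Q = !![-σ₁, σ₁; σ₂, -σ₂])
    (D : Matrix (Fin 2) (Fin 2) ℝ) (hD : D = Matrix.diagonal ![lam₁, lam₂])
    (π : Fin 2 → ℝ) (hπ : π = ![σ₂ / (σ₁ + σ₂), σ₁ / (σ₁ + σ₂)])
    (lamStar : ℝ) (hlamStar : lamStar = (π ᵥ* D) ⬝ᵥ (1 : Fin 2 → ℝ))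
    (J : Matrix (Fin 2) (Fin 2) ℝ) (hJ : J = Matrix.of fun _ j => π j) :
    IsUnit (J - Q).det ∧
      1 + (2 / lamStar) * ((π ᵥ* (D * ((J - Q)⁻¹ - J) * D)) ⬝ᵥ (1 : Fin 2 → ℝ)) =
        1 + 2 * σ₁ * σ₂ * (lam₁ - lam₂) ^ 2 /
          ((σ₁ + σ₂) ^ 2 * (lam₁ * σ₂ + lam₂ * σ₁)) ∧
      1 ≤ 1 + (2 / lamStar) * ((π ᵥ* (D * ((J - Q)⁻¹ - J) * D)) ⬝ᵥ (1 : Fin 2 → ℝ)) ∧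
      (1 + (2 / lamStar) * ((π ᵥ* (D * ((J - Q)⁻¹ - J) * D)) ⬝ᵥ (1 : Fin 2 → ℝ)) = 1 ↔
        lam₁ = lam₂) := by
  have hs : (0:ℝ) < σ₁ + σ₂ := by linarith
  have hs' : σ₁ + σ₂ ≠ 0 := ne_of_gt hs
  have hM : J - Q = !![σ₂ / (σ₁ + σ₂) + σ₁, σ₁ / (σ₁ + σ₂) - σ₁;
      σ₂ / (σ₁ + σ₂) - σ₂, σ₁ / (σ₁ + σ₂) + σ₂] := by
    subst hQ hπ hJ
    ext i j
    fin_cases i <;> fin_cases j <;>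
      simp [Matrix.sub_apply] <;> ring
  have hdet : (J - Q).det = σ₁ + σ₂ := by
    rw [hM, Matrix.det_fin_two_of]
    field_simp
    ring
  have hUnit : IsUnit (J - Q).det := by
    rw [hdet]; exact (isUnit_iff_ne_zero).2 hs'
  have hinv : (J - Q)⁻¹ = (σ₁ + σ₂)⁻¹ •
      !![σ₁ / (σ₁ + σ₂) + σ₂, -(σ₁ / (σ₁ + σ₂) - σ₁);
        -(σ₂ / (σ₁ + σ₂) - σ₂), σ₂ / (σ₁ + σ₂) + σ₁] := by
    rw [Matrix.inv_def, hdet, hM, Matrix.adjugate_fin_two_of]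
    simp [Ring.inverse_eq_inv']
  have hlamStar' : lamStar = (lam₁ * σ₂ + lam₂ * σ₁) / (σ₁ + σ₂) := by
    subst hπ hD
    rw [hlamStar]
    simp [Matrix.vecMul, dotProduct, Fin.sum_univ_two]
    field_simp
  have hlamne : lamStar ≠ 0 := by
    rw [hlamStar']
    positivity
  have key : (π ᵥ* (D * ((J - Q)⁻¹ - J) * D)) ⬝ᵥ (1 : Fin 2 → ℝ) =
      σ₁ * σ₂ * (lam₁ - lam₂) ^ 2 / (σ₁ + σ₂) ^ 3 := by
    rw [hinv]
    subst hπ hD hJ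
    simp only [Matrix.vecMul, dotProduct, Fin.sum_univ_two, Matrix.mul_apply,
      Matrix.sub_apply, Matrix.smul_apply, Matrix.diagonal_apply, Matrix.of_apply,
      Matrix.cons_val', Matrix.cons_val_zero, Matrix.cons_val_one, Matrix.head_cons,
      Matrix.head_fin_const, Matrix.empty_val', Matrix.cons_val_fin_one, smul_eq_mul,
      Pi.one_apply, mul_one]
    simp [Fin.sum_univ_two]
    field_simp
    ring
  refine ⟨hUnit, ?_, ?_, ?_⟩
  · rw [key, hlamStar']
    congr 1
    field_simp
  · rw [key, hlamStar']
    have h1 : (0:ℝ) ≤ 2 / ((lam₁ * σ₂ + lam₂ * σ₁) / (σ₁ + σ₂)) *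
        (σ₁ * σ₂ * (lam₁ - lam₂) ^ 2 / (σ₁ + σ₂) ^ 3) := by positivity
    linarith
  · rw [key, hlamStar']
    constructor
    · intro h
      have h2 : 2 / ((lam₁ * σ₂ + lam₂ * σ₁) / (σ₁ + σ₂)) *
          (σ₁ * σ₂ * (lam₁ - lam₂) ^ 2 / (σ₁ + σ₂) ^ 3) = 0 := by linarith
      have hc : (0:ℝ) < 2 / ((lam₁ * σ₂ + lam₂ * σ₁) / (σ₁ + σ₂)) := by positivity
      have h3 : σ₁ * σ₂ * (lam₁ - lam₂) ^ 2 / (σ₁ + σ₂) ^ 3 = 0 := by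
        rcases mul_eq_zero.1 h2 with h | h
        · exact absurd h (ne_of_gt hc)
        · exact h
      have hd : (0:ℝ) < (σ₁ + σ₂) ^ 3 := by positivity
      have h5 := (div_eq_zero_iff.mp h3).resolve_right (ne_of_gt hd)
      have h4 : (lam₁ - lam₂) ^ 2 = 0 := by
        rcases mul_eq_zero.mp h5 with h | h
        · nlinarith
        · exact h
      have := pow_eq_zero_iff (n := 2) (by norm_num) |>.1 h4
      linarith [sub_eq_zero.1 this]
    · intro h
      subst h
      simp
end

section
/- Let σ₁, σ₂ > 0 and λ₁, λ₂ ≥ 0 with σ₂λ₁ + σ₁λ₂ > 0. Let C be the 2×2 real matrix with rows (−σ₁−λ₁, σ₁) and (σ₂, −σ₂−λ₂), and let α = (σ₂λ₁/(σ₂λ₁+σ₁λ₂), σ₁λ₂/(σ₂λ₁+σ₁λ₂)). Then for all t ≥ 0, using the matrix exponential exp(tC): (α·C·exp(tC)·(−C)·𝟏)·(α·exp(tC)·𝟏) + (α·C·exp(tC)·𝟏)² ≤ 0, with equality for all t when λ₁ = λ₂. -/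
set_option maxHeartbeats 1600000

open Matrix

/-- For an MMPP₂ with `C = !![−σ₁−λ₁, σ₁; σ₂, −σ₂−λ₂]` and event-stationary
distribution `α = (σ₂λ₁, σ₁λ₂)/(σ₂λ₁+σ₁λ₂)`, for all `t ≥ 0`:
`(α·C·e^{tC}·(−C)·𝟏)·(α·e^{tC}·𝟏) + (α·C·e^{tC}·𝟏)² ≤ 0`,
with equality for all `t` when `λ₁ = λ₂`. -/
theorem stmt_12 (σ₁ σ₂ lam₁ lam₂ : ℝ) (hσ₁ : 0 < σ₁) (hσ₂ : 0 < σ₂)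
    (hlam₁ : 0 ≤ lam₁) (hlam₂ : 0 ≤ lam₂) (hpos : 0 < σ₂ * lam₁ + σ₁ * lam₂)
    (C : Matrix (Fin 2) (Fin 2) ℝ) (hC : C = !![-σ₁ - lam₁, σ₁; σ₂, -σ₂ - lam₂])
    (α : Fin 2 → ℝ)
    (hα : α = ![σ₂ * lam₁ / (σ₂ * lam₁ + σ₁ * lam₂), σ₁ * lam₂ / (σ₂ * lam₁ + σ₁ * lam₂)]) :
    (∀ t : ℝ, 0 ≤ t →
      ((α ᵥ* (C * NormedSpace.exp (t • C) * (-C))) ⬝ᵥ (1 : Fin 2 → ℝ)) *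
          ((α ᵥ* NormedSpace.exp (t • C)) ⬝ᵥ (1 : Fin 2 → ℝ)) +
        ((α ᵥ* (C * NormedSpace.exp (t • C))) ⬝ᵥ (1 : Fin 2 → ℝ)) ^ 2 ≤ 0) ∧
    (lam₁ = lam₂ → ∀ t : ℝ, 0 ≤ t →
      ((α ᵥ* (C * NormedSpace.exp (t • C) * (-C))) ⬝ᵥ (1 : Fin 2 → ℝ)) *
          ((α ᵥ* NormedSpace.exp (t • C)) ⬝ᵥ (1 : Fin 2 → ℝ)) +
        ((α ᵥ* (C * NormedSpace.exp (t • C))) ⬝ᵥ (1 : Fin 2 → ℝ)) ^ 2 = 0) := by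
  subst hC hα
  have hσ₁' : σ₁ ≠ 0 := hσ₁.ne'
  set s := σ₂ * lam₁ + σ₁ * lam₂ with hsdef
  clear_value s
  have hs : s ≠ 0 := hpos.ne'
  have hΔ : (0:ℝ) < (σ₁ + lam₁ - σ₂ - lam₂) ^ 2 + 4 * σ₁ * σ₂ := by positivity
  set r := Real.sqrt ((σ₁ + lam₁ - σ₂ - lam₂) ^ 2 + 4 * σ₁ * σ₂) with hrdef
  have hr : r ^ 2 = (σ₁ + lam₁ - σ₂ - lam₂) ^ 2 + 4 * σ₁ * σ₂ := Real.sq_sqrt hΔ.le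
  have hrpos : 0 < r := Real.sqrt_pos.2 hΔ
  have hr0 : r ≠ 0 := hrpos.ne'
  clear_value r
  set a : ℝ := -σ₁ - lam₁ with ha
  set d : ℝ := -σ₂ - lam₂ with hd
  set μ₁ : ℝ := (a + d - r) / 2 with hμ₁
  set μ₂ : ℝ := (a + d + r) / 2 with hμ₂
  clear_value a d μ₁ μ₂
  have hdiff : μ₂ - μ₁ = r := by rw [hμ₁, hμ₂]; ring
  have hne : μ₂ - μ₁ ≠ 0 := by rw [hdiff]; exact hr0
  set Cm : Matrix (Fin 2) (Fin 2) ℝ := !![a, σ₁; σ₂, d] with hCm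
  set U : Matrix (Fin 2) (Fin 2) ℝ := !![σ₁, σ₁; μ₁ - a, μ₂ - a] with hU
  set V : Matrix (Fin 2) (Fin 2) ℝ :=
    !![(μ₂ - a)/(σ₁*r), -1/r; (a - μ₁)/(σ₁*r), 1/r] with hV
  clear_value Cm U V
  have hUV : U * V = 1 := by
    ext i j
    fin_cases i <;> fin_cases j <;>
      · simp only [hU, hV, Matrix.mul_apply, Fin.sum_univ_two, Matrix.cons_val',
          Matrix.cons_val_zero, Matrix.cons_val_one, Matrix.head_cons, Matrix.head_fin_const,
          Matrix.empty_val', Matrix.cons_val_fin_one, Matrix.one_apply, Matrix.of_apply,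
          Fin.zero_eta, Fin.mk_one, if_true, if_false, zero_ne_one, one_ne_zero]
        rw [← hdiff]
        field_simp
        try ring
  have hVU : V * U = 1 := by
    ext i j
    fin_cases i <;> fin_cases j <;>
      · simp only [hU, hV, Matrix.mul_apply, Fin.sum_univ_two, Matrix.cons_val',
          Matrix.cons_val_zero, Matrix.cons_val_one, Matrix.head_cons, Matrix.head_fin_const,
          Matrix.empty_val', Matrix.cons_val_fin_one, Matrix.one_apply, Matrix.of_apply,
          Fin.zero_eta, Fin.mk_one, if_true, if_false, zero_ne_one, one_ne_zero]
        rw [← hdiff]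
        field_simp
        try ring
  have hCU : Cm * U = U * Matrix.diagonal ![μ₁, μ₂] := by
    ext i j
    fin_cases i <;> fin_cases j <;>
      · simp only [hCm, hU, Matrix.mul_apply, Fin.sum_univ_two, Matrix.diagonal,
          Matrix.cons_val', Matrix.cons_val_zero, Matrix.cons_val_one, Matrix.head_cons,
          Matrix.head_fin_const, Matrix.empty_val', Matrix.cons_val_fin_one, Matrix.of_apply]
        norm_num
        simp only [hμ₁, hμ₂, ha, hd]
        first
          | ring1
          | linear_combination (-(1:ℝ)/4) * hr
  have hCdiag : Cm = U * Matrix.diagonal ![μ₁, μ₂] * V := by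
    calc Cm = Cm * (U * V) := by rw [hUV, mul_one]
    _ = Cm * U * V := by rw [mul_assoc]
    _ = U * Matrix.diagonal ![μ₁, μ₂] * V := by rw [hCU]
  have hsand : ∀ x₁ y₁ x₂ y₂ : ℝ,
      (U * Matrix.diagonal ![x₁, y₁] * V) * (U * Matrix.diagonal ![x₂, y₂] * V) =
        U * Matrix.diagonal ![x₁ * x₂, y₁ * y₂] * V := by
    intro x₁ y₁ x₂ y₂
    have hv : (Matrix.diagonal (fun i => (![x₁, y₁] : Fin 2 → ℝ) i * ![x₂, y₂] i)
        : Matrix (Fin 2) (Fin 2) ℝ) = Matrix.diagonal ![x₁ * x₂, y₁ * y₂] := by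
      ext i j; fin_cases i <;> fin_cases j <;> simp [Matrix.diagonal]
    calc (U * Matrix.diagonal ![x₁, y₁] * V) * (U * Matrix.diagonal ![x₂, y₂] * V)
        = U * Matrix.diagonal ![x₁, y₁] * (V * U) * (Matrix.diagonal ![x₂, y₂] * V) := by
          simp only [mul_assoc]
      _ = U * (Matrix.diagonal ![x₁, y₁] * Matrix.diagonal ![x₂, y₂]) * V := by
          rw [hVU, mul_one]; simp only [mul_assoc]
      _ = U * Matrix.diagonal ![x₁ * x₂, y₁ * y₂] * V := by
          rw [Matrix.diagonal_mul_diagonal, hv]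
  have hexp : ∀ t : ℝ, NormedSpace.exp (t • Cm) =
      U * Matrix.diagonal ![Real.exp (t * μ₁), Real.exp (t * μ₂)] * V := by
    intro t
    have hsD : Matrix.diagonal ![t * μ₁, t * μ₂] = t • Matrix.diagonal ![μ₁, μ₂] := by
      ext i j; fin_cases i <;> fin_cases j <;> simp [Matrix.diagonal]
    have h1 : t • Cm = U * Matrix.diagonal ![t * μ₁, t * μ₂] * V := by
      rw [hCdiag, hsD, mul_smul_comm, smul_mul_assoc]
    let u : (Matrix (Fin 2) (Fin 2) ℝ)ˣ := ⟨U, V, hUV, hVU⟩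
    have h := Matrix.exp_units_conj u (Matrix.diagonal ![t * μ₁, t * μ₂])
    have hu : (u : Matrix (Fin 2) (Fin 2) ℝ) = U := rfl
    have hui : ((u⁻¹ : (Matrix (Fin 2) (Fin 2) ℝ)ˣ) : Matrix (Fin 2) (Fin 2) ℝ) = V := rfl
    rw [hu, hui] at h
    have hv : NormedSpace.exp (![t * μ₁, t * μ₂] : Fin 2 → ℝ) =
        ![Real.exp (t * μ₁), Real.exp (t * μ₂)] := by
      funext i; fin_cases i <;> simp [Real.exp_eq_exp_ℝ]
    rw [h1, h, Matrix.exp_diagonal, hv]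
  have hM1 : ∀ t : ℝ, Cm * NormedSpace.exp (t • Cm) =
      U * Matrix.diagonal ![μ₁ * Real.exp (t * μ₁), μ₂ * Real.exp (t * μ₂)] * V := by
    intro t
    rw [hexp t]
    nth_rewrite 1 [hCdiag]
    exact hsand _ _ _ _
  have hnC : -Cm = U * Matrix.diagonal ![-μ₁, -μ₂] * V := by
    have hdneg : (Matrix.diagonal ![-μ₁, -μ₂] : Matrix (Fin 2) (Fin 2) ℝ) =
        -Matrix.diagonal ![μ₁, μ₂] := by
      ext i j; fin_cases i <;> fin_cases j <;> simp [Matrix.diagonal]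
    rw [hdneg, Matrix.mul_neg, Matrix.neg_mul, ← hCdiag]
  have hM2 : ∀ t : ℝ, Cm * NormedSpace.exp (t • Cm) * (-Cm) =
      U * Matrix.diagonal ![μ₁ * Real.exp (t * μ₁) * -μ₁, μ₂ * Real.exp (t * μ₂) * -μ₂]
        * V := by
    intro t
    rw [hM1 t, hnC]
    exact hsand _ _ _ _
  set p₁ : ℝ := σ₁ * (σ₂ * lam₁ + lam₂ * (μ₁ - a)) with hp₁
  set p₂ : ℝ := σ₁ * (σ₂ * lam₁ + lam₂ * (μ₂ - a)) with hp₂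
  set q₁ : ℝ := μ₂ - a - σ₁ with hq₁
  set q₂ : ℝ := a - μ₁ + σ₁ with hq₂
  clear_value p₁ p₂ q₁ q₂
  have hscal : ∀ x y : ℝ,
      ((![σ₂ * lam₁ / s, σ₁ * lam₂ / s] : Fin 2 → ℝ) ᵥ*
        (U * Matrix.diagonal ![x, y] * V)) ⬝ᵥ (1 : Fin 2 → ℝ) =
      (p₁ * q₁ * x + p₂ * q₂ * y) / (s * σ₁ * r) := by
    intro x y
    rw [hp₁, hp₂, hq₁, hq₂]
    simp only [hU, hV, Matrix.vecMul, dotProduct, Fin.sum_univ_two, Matrix.mul_apply,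
      Matrix.diagonal, Matrix.cons_val', Matrix.cons_val_zero, Matrix.cons_val_one,
      Matrix.head_cons, Matrix.empty_val', Matrix.cons_val_fin_one, Matrix.head_fin_const,
      Matrix.of_apply, Pi.one_apply]
    norm_num
    field_simp
    ring
  have key : ∀ t : ℝ,
      ((![σ₂ * lam₁ / s, σ₁ * lam₂ / s] : Fin 2 → ℝ) ᵥ*
          (Cm * NormedSpace.exp (t • Cm) * (-Cm))) ⬝ᵥ (1 : Fin 2 → ℝ) *
        (((![σ₂ * lam₁ / s, σ₁ * lam₂ / s] : Fin 2 → ℝ) ᵥ*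
          NormedSpace.exp (t • Cm)) ⬝ᵥ (1 : Fin 2 → ℝ)) +
        (((![σ₂ * lam₁ / s, σ₁ * lam₂ / s] : Fin 2 → ℝ) ᵥ*
          (Cm * NormedSpace.exp (t • Cm))) ⬝ᵥ (1 : Fin 2 → ℝ)) ^ 2 =
      -((p₁ * p₂ * q₁ * q₂) / (s ^ 2 * σ₁ ^ 2)) *
        (Real.exp (t * μ₁) * Real.exp (t * μ₂)) := by
    intro t
    rw [hM2 t, hM1 t, hexp t, hscal, hscal, hscal]
    rw [← hdiff]
    field_simp
    ring
  have hpoly : p₁ * p₂ * q₁ * q₂ =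
      σ₁ ^ 3 * σ₂ * (lam₁ - lam₂) ^ 2 * (s + lam₁ * lam₂) := by
    rw [hp₁, hp₂, hq₁, hq₂, hμ₁, hμ₂, ha, hd, hsdef]
    linear_combination
      (σ₁ ^ 2 * ((σ₂ * lam₁) ^ 2 + σ₂ * lam₁ * lam₂ * (σ₁ + lam₁ - σ₂ - lam₂)
          + lam₂ ^ 2 * (σ₁ + lam₁ - σ₂ - lam₂) ^ 2 / 4) / 4
        + σ₁ ^ 2 * lam₂ ^ 2 * ((σ₁ + lam₁ - σ₂ - lam₂) / 2 - σ₁) ^ 2 / 4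
        - σ₁ ^ 2 * lam₂ ^ 2 *
            (r ^ 2 + ((σ₁ + lam₁ - σ₂ - lam₂) ^ 2 + 4 * σ₁ * σ₂)) / 16) * hr
  have hK : 0 ≤ p₁ * p₂ * q₁ * q₂ := by
    rw [hpoly]
    have h1 : 0 ≤ s + lam₁ * lam₂ := add_nonneg hpos.le (mul_nonneg hlam₁ hlam₂)
    have h2 : (0:ℝ) ≤ σ₁ ^ 3 * σ₂ := by positivity
    exact mul_nonneg (mul_nonneg h2 (sq_nonneg _)) h1
  constructor
  · intro t _
    rw [key t]
    have h1 : 0 ≤ (p₁ * p₂ * q₁ * q₂) / (s ^ 2 * σ₁ ^ 2) *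
        (Real.exp (t * μ₁) * Real.exp (t * μ₂)) :=
      mul_nonneg (div_nonneg hK (by positivity))
        (mul_nonneg (Real.exp_pos _).le (Real.exp_pos _).le)
    linarith
  · intro heq t _
    rw [key t, hpoly, heq]
    ring
end

section
/- Let σ₁, σ₂ > 0 and λ₁, λ₂ ≥ 0 with σ₂λ₁ + σ₁λ₂ > 0. Let C be the 2×2 real matrix with rows (−σ₁−λ₁, σ₁) and (σ₂, −σ₂−λ₂), π = (σ₂/(σ₁+σ₂), σ₁/(σ₁+σ₂)) and α = (σ₂λ₁/(σ₂λ₁+σ₁λ₂), σ₁λ₂/(σ₂λ₁+σ₁λ₂)). Then for all t ≥ 0, using the matrix exponential exp(tC): (π − α)·exp(tC)·𝟏 ≥ 0, with equality for all t when λ₁ = λ₂. -/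
open Matrix

lemma exp_diag_conj (A B : Matrix (Fin 2) (Fin 2) ℝ) (hAB : A * B = 1) (hBA : B * A = 1)
    (v : Fin 2 → ℝ) :
    NormedSpace.exp (A * Matrix.diagonal v * B)
      = A * Matrix.diagonal (fun i => Real.exp (v i)) * B := by
  have h := Matrix.exp_units_conj (⟨A, B, hAB, hBA⟩ : (Matrix (Fin 2) (Fin 2) ℝ)ˣ)
    (Matrix.diagonal v)
  simp only [Units.inv_mk] at h
  rw [h, Matrix.exp_diagonal, Pi.exp_def]
  simp [Real.exp_eq_exp_ℝ]

lemma smul_conj (t : ℝ) (A B : Matrix (Fin 2) (Fin 2) ℝ) (v : Fin 2 → ℝ) :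
    t • (A * Matrix.diagonal v * B) = A * Matrix.diagonal (fun i => t * v i) * B := by
  have : Matrix.diagonal (fun i => t * v i) = t • Matrix.diagonal v := by
    ext i j
    rcases eq_or_ne i j with h | h
    · subst h; simp
    · simp [Matrix.diagonal_apply_ne _ h]
  rw [this, Matrix.mul_smul, Matrix.smul_mul]

lemma diag2 (x y : ℝ) : Matrix.diagonal ![x, y] = !![x, 0; 0, y] := by
  ext i j
  fin_cases i <;> fin_cases j <;> simp [Matrix.diagonal]

lemma dot2 (w0 w1 r : ℝ) (Q : Matrix (Fin 2) (Fin 2) ℝ) :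
    ((![w0, w1]) ᵥ* (r • Q)) ⬝ᵥ (1 : Fin 2 → ℝ)
      = r * (w0 * Q 0 0 + w0 * Q 0 1 + w1 * Q 1 0 + w1 * Q 1 1) := by
  simp [Matrix.vecMul, dotProduct, Fin.sum_univ_two]
  ring

/-- For an MMPP₂ with `C = !![−σ₁−λ₁, σ₁; σ₂, −σ₂−λ₂]`,
`π = (σ₂, σ₁)/(σ₁+σ₂)` and `α = (σ₂λ₁, σ₁λ₂)/(σ₂λ₁+σ₁λ₂)`, for all `t ≥ 0`:
`(π − α)·e^{tC}·𝟏 ≥ 0`, with equality for all `t` when `λ₁ = λ₂`. -/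
theorem stmt_13 (σ₁ σ₂ lam₁ lam₂ : ℝ) (hσ₁ : 0 < σ₁) (hσ₂ : 0 < σ₂)
    (hlam₁ : 0 ≤ lam₁) (hlam₂ : 0 ≤ lam₂) (hpos : 0 < σ₂ * lam₁ + σ₁ * lam₂)
    (C : Matrix (Fin 2) (Fin 2) ℝ) (hC : C = !![-σ₁ - lam₁, σ₁; σ₂, -σ₂ - lam₂])
    (π : Fin 2 → ℝ) (hπ : π = ![σ₂ / (σ₁ + σ₂), σ₁ / (σ₁ + σ₂)])
    (α : Fin 2 → ℝ)
    (hα : α = ![σ₂ * lam₁ / (σ₂ * lam₁ + σ₁ * lam₂), σ₁ * lam₂ / (σ₂ * lam₁ + σ₁ * lam₂)]) :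
    (∀ t : ℝ, 0 ≤ t →
      0 ≤ ((π - α) ᵥ* NormedSpace.exp (t • C)) ⬝ᵥ (1 : Fin 2 → ℝ)) ∧
    (lam₁ = lam₂ → ∀ t : ℝ, 0 ≤ t →
      ((π - α) ᵥ* NormedSpace.exp (t • C)) ⬝ᵥ (1 : Fin 2 → ℝ) = 0) := by
  have hσ12 : (0:ℝ) < σ₁ + σ₂ := by linarith
  obtain ⟨a, ha⟩ : ∃ x : ℝ, x = -σ₁ - lam₁ := ⟨_, rfl⟩
  obtain ⟨d, hd⟩ : ∃ x : ℝ, x = -σ₂ - lam₂ := ⟨_, rfl⟩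
  have hΔpos : (0:ℝ) < (a - d)^2 + 4*σ₁*σ₂ := by positivity
  obtain ⟨s, hsdef⟩ : ∃ x : ℝ, x = Real.sqrt ((a - d)^2 + 4*σ₁*σ₂) := ⟨_, rfl⟩
  have hs2 : s^2 = (a - d)^2 + 4*σ₁*σ₂ := by rw [hsdef]; exact Real.sq_sqrt hΔpos.le
  have hspos : (0:ℝ) < s := by rw [hsdef]; exact Real.sqrt_pos.mpr hΔpos
  obtain ⟨μp, hμp⟩ : ∃ x : ℝ, x = ((a + d) + s)/2 := ⟨_, rfl⟩
  obtain ⟨μm, hμm⟩ : ∃ x : ℝ, x = ((a + d) - s)/2 := ⟨_, rfl⟩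
  obtain ⟨A, hAdef⟩ : ∃ X : Matrix (Fin 2) (Fin 2) ℝ, X = !![σ₁, σ₁; μp - a, μm - a] := ⟨_, rfl⟩
  obtain ⟨Bd, hBdef⟩ : ∃ X : Matrix (Fin 2) (Fin 2) ℝ, X = !![μm - a, -σ₁; a - μp, σ₁] := ⟨_, rfl⟩
  obtain ⟨k, hk⟩ : ∃ x : ℝ, x = -(σ₁*s) := ⟨_, rfl⟩
  have hkne : k ≠ 0 := by rw [hk]; intro h; nlinarith
  have hs2' : s^2 = ((-σ₁ - lam₁) - (-σ₂ - lam₂))^2 + 4*σ₁*σ₂ := by rw [hs2, ha, hd]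
  obtain ⟨B, hB⟩ : ∃ X : Matrix (Fin 2) (Fin 2) ℝ, X = k⁻¹ • Bd := ⟨_, rfl⟩
  have hABd : A * Bd = k • (1 : Matrix (Fin 2) (Fin 2) ℝ) := by
    rw [hAdef, hBdef]
    ext i j
    fin_cases i <;> fin_cases j <;>
      simp [Matrix.mul_apply, Fin.sum_univ_two, Matrix.one_apply, hμp, hμm, hk]
    all_goals (first | ring1 | linear_combination (-(s/4)) * hs2 | linear_combination (s/4) * hs2 | linear_combination (-(s/4)) * hs2' | linear_combination (s/4) * hs2')
  have hBdA : Bd * A = k • (1 : Matrix (Fin 2) (Fin 2) ℝ) := by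
    rw [hAdef, hBdef]
    ext i j
    fin_cases i <;> fin_cases j <;>
      simp [Matrix.mul_apply, Fin.sum_univ_two, Matrix.one_apply, hμp, hμm, hk]
    all_goals (first | ring1 | linear_combination (-(s/4)) * hs2 | linear_combination (s/4) * hs2 | linear_combination (-(s/4)) * hs2' | linear_combination (s/4) * hs2')
  have hAB : A * B = 1 := by
    rw [hB, Matrix.mul_smul, hABd, smul_smul, inv_mul_cancel₀ hkne, one_smul]
  have hBA : B * A = 1 := by
    rw [hB, Matrix.smul_mul, hBdA, smul_smul, inv_mul_cancel₀ hkne, one_smul]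
  have hCdiag : C = A * Matrix.diagonal ![μp, μm] * B := by
    rw [hB, Matrix.mul_smul]
    have h2 : A * Matrix.diagonal ![μp, μm] * Bd = k • C := by
      rw [hAdef, hBdef, hC, diag2]
      ext i j
      fin_cases i <;> fin_cases j <;>
        simp [Matrix.mul_apply, Fin.sum_univ_two, hμp, hμm, hk, ha, hd]
      all_goals (first | ring1 | linear_combination (-(s/4)) * hs2 | linear_combination (s/4) * hs2 | linear_combination (-(s/4)) * hs2' | linear_combination (s/4) * hs2')
    rw [h2, smul_smul, inv_mul_cancel₀ hkne, one_smul]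
  have hexp : ∀ t : ℝ, NormedSpace.exp (t • C) =
      A * Matrix.diagonal (fun i => Real.exp (t * (![μp, μm] i))) * B := by
    intro t
    rw [hCdiag, smul_conj, exp_diag_conj A B hAB hBA]
  obtain ⟨c, hc⟩ : ∃ x : ℝ, x = σ₁*σ₂*(lam₂ - lam₁)/((σ₁ + σ₂)*(σ₂*lam₁ + σ₁*lam₂)) := ⟨_, rfl⟩
  have hv : π - α = ![c, -c] := by
    funext i
    fin_cases i <;>
      (simp [hπ, hα, hc]; field_simp; ring)
  constructor
  · intro t ht
    obtain ⟨ep, hep⟩ : ∃ x : ℝ, x = Real.exp (t * μp) := ⟨_, rfl⟩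
    obtain ⟨em, hem⟩ : ∃ x : ℝ, x = Real.exp (t * μm) := ⟨_, rfl⟩
    have hemep : em ≤ ep := by
      rw [hep, hem]
      apply Real.exp_le_exp.mpr
      apply mul_le_mul_of_nonneg_left _ ht
      rw [hμp, hμm]; linarith
    have hEE : Matrix.diagonal (fun i => Real.exp (t * (![μp, μm] i))) = !![ep, 0; 0, em] := by
      rw [show (fun i => Real.exp (t * (![μp, μm] i))) = ![ep, em] by
        funext i; fin_cases i <;> simp [hep, hem], diag2]
    have hprod : A * !![ep, 0; 0, em] * Bd =
        !![σ₁*ep*(μm - a) + σ₁*em*(a - μp), -(σ₁*σ₁)*ep + (σ₁*σ₁)*em;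
           (μp - a)*ep*(μm - a) + (μm - a)*em*(a - μp), -σ₁*(μp - a)*ep + σ₁*(μm - a)*em] := by
      rw [hAdef, hBdef]
      ext i j
      fin_cases i <;> fin_cases j <;>
        simp [Matrix.mul_apply, Fin.sum_univ_two]
      all_goals ring
    rw [hexp t, hEE, hB, Matrix.mul_smul, hprod, hv, dot2]
    have hgval : c * (σ₁*ep*(μm - a) + σ₁*em*(a - μp))
        + c * (-(σ₁*σ₁)*ep + (σ₁*σ₁)*em)
        + (-c) * ((μp - a)*ep*(μm - a) + (μm - a)*em*(a - μp))
        + (-c) * (-σ₁*(μp - a)*ep + σ₁*(μm - a)*em)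
        = c * (σ₁ * (lam₂ - lam₁) * (em - ep)) := by
      rw [hμp, hμm, ha, hd]
      first
        | linear_combination (-(c*(em - ep)/4)) * hs2'
        | linear_combination (c*(em - ep)/4) * hs2'
        | linear_combination (-(c*(ep - em)/4)) * hs2'
        | linear_combination (c*(ep - em)/4) * hs2' 
    simp only [Matrix.cons_val', Matrix.cons_val_zero, Matrix.cons_val_one, Matrix.head_cons,
      Matrix.empty_val', Matrix.cons_val_fin_one, Matrix.head_fin_const, Matrix.of_apply]
    rw [hgval, hk, hc]
    have hrw : (-(σ₁*s))⁻¹ *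
        (σ₁*σ₂*(lam₂ - lam₁)/((σ₁ + σ₂)*(σ₂*lam₁ + σ₁*lam₂)) * (σ₁ * (lam₂ - lam₁) * (em - ep)))
        = σ₁*σ₂*(lam₂ - lam₁)^2*(ep - em) / (((σ₁ + σ₂)*(σ₂*lam₁ + σ₁*lam₂))*s) := by
      field_simp
      ring
    rw [hrw]
    apply div_nonneg
    · exact mul_nonneg (by positivity) (by linarith)
    · positivity
  · intro hll t ht
    have hα' : α = π := by
      rw [hα, hπ, hll]
      have hl2 : 0 < lam₂ := by nlinarith
      funext i; fin_cases i <;> (simp; field_simp; ring)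
    rw [hα', sub_self, Matrix.zero_vecMul, zero_dotProduct]
end

section
/- Let Q be the 4×4 real matrix with rows (−1,1,0,0), (0,−1,1,0), (0,0,−1,1), (1,0,0,−1), let D = diag(1/100, 1/100, 1, 1), and let C = Q − D. Then C is invertible, and for every probability vector α : Fin 4 → ℝ satisfying α·(−C)⁻¹·D = α, the hazard-rate function h(t) = (α·exp(tC)·D·𝟏)/(α·exp(tC)·𝟏) (with exp the matrix exponential and 𝟏 the all-ones column vector) is NOT antitone on [0, ∞); i.e., there exist 0 ≤ t₁ < t₂ with h(t₁) < h(t₂). -/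
set_option maxHeartbeats 1000000

open Matrix NormedSpace
open scoped Nat

attribute [local instance] Matrix.linftyOpNormedRing Matrix.linftyOpNormedAlgebra

namespace Stmt14
section NormSection

lemma norm_le_of_rows (A : Matrix (Fin 4) (Fin 4) ℝ) (r : ℝ) (hr : 0 ≤ r)
    (h : ∀ i, ∑ j, |A i j| ≤ r) : ‖A‖ ≤ r := by
  rw [Matrix.linfty_opNorm_def]
  have key : (Finset.univ.sup fun i : Fin 4 => ∑ j, ‖A i j‖₊) ≤ r.toNNReal := by
    refine Finset.sup_le fun i _ => ?_
    rw [← NNReal.coe_le_coe]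
    push_cast
    simpa [Real.coe_toNNReal _ hr, Real.norm_eq_abs] using h i
  calc ((Finset.univ.sup fun i : Fin 4 => ∑ j, ‖A i j‖₊ : NNReal) : ℝ)
      ≤ (r.toNNReal : ℝ) := by exact_mod_cast key
    _ = r := Real.coe_toNNReal _ hr

lemma dot_exp_eq_tsum (A : Matrix (Fin 4) (Fin 4) ℝ) (x y : Fin 4 → ℝ) :
    (x ᵥ* NormedSpace.exp A) ⬝ᵥ y = ∑' (k : ℕ), ((k ! : ℝ)⁻¹ * ((x ᵥ* A ^ k) ⬝ᵥ y)) := by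
  let L : Matrix (Fin 4) (Fin 4) ℝ →ₗ[ℝ] ℝ :=
    { toFun := fun M => (x ᵥ* M) ⬝ᵥ y
      map_add' := fun M N => by
        simp [Matrix.vecMul_add, add_dotProduct]
      map_smul' := fun c M => by
        simp [Matrix.vecMul, dotProduct, Finset.mul_sum, Finset.sum_mul,
          mul_comm, mul_assoc, mul_left_comm] }
  have hL : Continuous L := L.continuous_of_finiteDimensional
  have hsum : Summable fun k : ℕ => ((k ! : ℝ)⁻¹ : ℝ) • A ^ k :=
    expSeries_summable' (𝕂 := ℝ) A
  rw [exp_eq_tsum ℝ]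
  have h2 := (hsum.hasSum.map L hL).tsum_eq
  have h3 : L (∑' (k : ℕ), ((k ! : ℝ)⁻¹ : ℝ) • A ^ k)
      = ∑' (k : ℕ), L (((k ! : ℝ)⁻¹ : ℝ) • A ^ k) := h2.symm
  calc (x ᵥ* ∑' (k : ℕ), ((k ! : ℝ)⁻¹ : ℝ) • A ^ k) ⬝ᵥ y
      = L (∑' (k : ℕ), ((k ! : ℝ)⁻¹ : ℝ) • A ^ k) := rfl
    _ = ∑' (k : ℕ), L (((k ! : ℝ)⁻¹ : ℝ) • A ^ k) := h3
    _ = ∑' (k : ℕ), ((k ! : ℝ)⁻¹ * ((x ᵥ* A ^ k) ⬝ᵥ y)) := by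
        refine tsum_congr fun k => ?_
        simp only [L, LinearMap.coe_mk, AddHom.coe_mk]
        simp [Matrix.vecMul, dotProduct, Finset.mul_sum, Finset.sum_mul,
          mul_comm, mul_assoc, mul_left_comm]

lemma tsum_tail_bound (c : ℕ → ℝ) (r : ℝ) (hr : 0 ≤ r) (N : ℕ) (hN : r < N + 1)
    (hc : ∀ k, |c k| ≤ r ^ k / k !) :
    |(∑' k, c k) - ∑ k ∈ Finset.range N, c k| ≤ r ^ N / N ! * (1 - r / (N + 1))⁻¹ := by
  have hbs : Summable fun k : ℕ => r ^ k / (k ! : ℝ) := Real.summable_pow_div_factorial r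
  have hsum : Summable c := by
    refine Summable.of_norm_bounded hbs fun k => ?_
    simpa [Real.norm_eq_abs] using hc k
  have hsplit : (∑ k ∈ Finset.range N, c k) + (∑' (k : ℕ), c (k + N)) = ∑' k, c k :=
    Summable.sum_add_tsum_nat_add N hsum
  have hdiff : (∑' k, c k) - ∑ k ∈ Finset.range N, c k = ∑' (k : ℕ), c (k + N) := by
    linarith
  rw [hdiff]
  have hq : r / (N + 1) < 1 := by
    rw [div_lt_one (by positivity)]
    exact hN
  have hq0 : 0 ≤ r / (N + 1) := by positivity
  have hterm : ∀ k : ℕ, |c (k + N)| ≤ r ^ N / N ! * (r / (N + 1)) ^ k := by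
    intro k
    refine (hc (k + N)).trans ?_
    have hfac : (N ! : ℝ) * ((N : ℝ) + 1) ^ k ≤ ((k + N)! : ℝ) := by
      have h := Nat.factorial_mul_pow_le_factorial (m := N) (n := k)
      calc (N ! : ℝ) * ((N : ℝ) + 1) ^ k = ((N ! * (N + 1) ^ k : ℕ) : ℝ) := by push_cast; ring
        _ ≤ ((k + N)! : ℝ) := by
            rw [Nat.add_comm k N]
            exact_mod_cast h
    rw [pow_add, div_pow, div_mul_div_comm, mul_comm (r ^ k) (r ^ N)]
    gcongr
  have hs1 : Summable fun k : ℕ => c (k + N) := (summable_nat_add_iff N).2 hsum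
  have hs2 : Summable fun k : ℕ => |c (k + N)| := by
    refine Summable.of_nonneg_of_le (fun k => abs_nonneg _) hterm ?_
    exact (summable_geometric_of_lt_one hq0 hq).mul_left _
  have hs3 : Summable fun k : ℕ => r ^ N / N ! * (r / (N + 1)) ^ k :=
    (summable_geometric_of_lt_one hq0 hq).mul_left _
  have hs2' : Summable fun k : ℕ => ‖c (k + N)‖ := by
    simpa only [Real.norm_eq_abs] using hs2
  calc |∑' (k : ℕ), c (k + N)| ≤ ∑' (k : ℕ), |c (k + N)| := by
        have h := norm_tsum_le_tsum_norm hs2'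
        simpa only [Real.norm_eq_abs] using h
    _ ≤ ∑' (k : ℕ), r ^ N / N ! * (r / (N + 1)) ^ k := Summable.tsum_le_tsum hterm hs2 hs3
    _ = r ^ N / N ! * (1 - r / (N + 1))⁻¹ := by
        rw [tsum_mul_left, tsum_geometric_of_lt_one hq0 hq]

lemma dot_pow_bound (A : Matrix (Fin 4) (Fin 4) ℝ) (x y : Fin 4 → ℝ)
    (hx : ∀ i, 0 ≤ x i) (hx1 : ∑ i, x i = 1) (hy : ∀ j, |y j| ≤ 1)
    (r : ℝ) (hr : 0 ≤ r) (hA : ‖A‖ ≤ r) (k : ℕ) :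
    |(x ᵥ* A ^ k) ⬝ᵥ y| ≤ r ^ k := by
  have hpow : ‖A ^ k‖ ≤ r ^ k := by
    induction k with
    | zero =>
        simp only [pow_zero]
        rw [show (1 : Matrix (Fin 4) (Fin 4) ℝ) = Matrix.diagonal 1 from (Matrix.diagonal_one).symm,
          Matrix.linfty_opNorm_diagonal]
        exact le_of_eq norm_one
    | succ n ih =>
        calc ‖A ^ (n + 1)‖ = ‖A ^ n * A‖ := by rw [pow_succ]
          _ ≤ ‖A ^ n‖ * ‖A‖ := Matrix.linfty_opNorm_mul _ _
          _ ≤ r ^ n * r := by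
              apply mul_le_mul ih hA (norm_nonneg _) (by positivity)
          _ = r ^ (n + 1) := by rw [pow_succ]
  have hyn : ‖y‖ ≤ 1 := by
    rw [pi_norm_le_iff_of_nonneg (by norm_num)]
    intro i; simpa [Real.norm_eq_abs] using hy i
  have hw : ‖A ^ k *ᵥ y‖ ≤ r ^ k := by
    calc ‖A ^ k *ᵥ y‖ ≤ ‖A ^ k‖ * ‖y‖ := Matrix.linfty_opNorm_mulVec _ _
      _ ≤ r ^ k * 1 := by
          apply mul_le_mul hpow hyn (norm_nonneg _) (by positivity)
      _ = r ^ k := mul_one _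
  rw [← Matrix.dotProduct_mulVec]
  set w := A ^ k *ᵥ y with hwdef
  calc |x ⬝ᵥ w| ≤ ∑ i, |x i * w i| := by
        exact Finset.abs_sum_le_sum_abs _ _
    _ ≤ ∑ i, x i * (r ^ k) := by
        refine Finset.sum_le_sum fun i _ => ?_
        rw [abs_mul, abs_of_nonneg (hx i)]
        refine mul_le_mul_of_nonneg_left ?_ (hx i)
        calc |w i| ≤ ‖w‖ := by
              simpa [Real.norm_eq_abs] using norm_le_pi_norm w i
          _ ≤ r ^ k := hw
    _ = r ^ k := by rw [← Finset.sum_mul, hx1, one_mul]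

lemma dot_exp_bounds (A : Matrix (Fin 4) (Fin 4) ℝ) (x y : Fin 4 → ℝ)
    (hx : ∀ i, 0 ≤ x i) (hx1 : ∑ i, x i = 1) (hy : ∀ j, |y j| ≤ 1)
    (r : ℝ) (hr : 0 ≤ r) (hA : ‖A‖ ≤ r) (N : ℕ) (hN : r < N + 1) (ε : ℝ)
    (hε : r ^ N / N ! * (1 - r / (N + 1))⁻¹ ≤ ε) :
    (∑ k ∈ Finset.range N, (k ! : ℝ)⁻¹ * ((x ᵥ* A ^ k) ⬝ᵥ y)) - ε ≤ (x ᵥ* NormedSpace.exp A) ⬝ᵥ y ∧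
      (x ᵥ* NormedSpace.exp A) ⬝ᵥ y ≤ (∑ k ∈ Finset.range N, (k ! : ℝ)⁻¹ * ((x ᵥ* A ^ k) ⬝ᵥ y)) + ε := by
  rw [dot_exp_eq_tsum]
  have key := tsum_tail_bound (fun k => (k ! : ℝ)⁻¹ * ((x ᵥ* A ^ k) ⬝ᵥ y)) r hr N hN ?_
  · rw [abs_sub_le_iff] at key
    constructor <;> nlinarith [key.1, key.2]
  · intro k
    have h0 : (0:ℝ) ≤ ((k ! : ℕ) : ℝ)⁻¹ := by positivity
    rw [abs_mul, abs_of_nonneg h0, div_eq_inv_mul]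
    exact mul_le_mul_of_nonneg_left (dot_pow_bound A x y hx hx1 hy r hr hA k) h0

end NormSection

lemma dot_exp_bounds' (A : Matrix (Fin 4) (Fin 4) ℝ) (x y : Fin 4 → ℝ)
    (hx : ∀ i, 0 ≤ x i) (hx1 : ∑ i, x i = 1) (hy : ∀ j, |y j| ≤ 1)
    (r : ℝ) (hr : 0 ≤ r) (hrows : ∀ i, ∑ j, |A i j| ≤ r) (N : ℕ) (hN : r < N + 1) (ε : ℝ)
    (hε : r ^ N / N ! * (1 - r / (N + 1))⁻¹ ≤ ε) :
    (∑ k ∈ Finset.range N, (k ! : ℝ)⁻¹ * ((x ᵥ* A ^ k) ⬝ᵥ y)) - ε ≤ (x ᵥ* NormedSpace.exp A) ⬝ᵥ y ∧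
      (x ᵥ* NormedSpace.exp A) ⬝ᵥ y ≤ (∑ k ∈ Finset.range N, (k ! : ℝ)⁻¹ * ((x ᵥ* A ^ k) ⬝ᵥ y)) + ε :=
  dot_exp_bounds A x y hx hx1 hy r hr (norm_le_of_rows A r hr hrows) N hN ε hε


noncomputable def av : Fin 4 → ℝ := ![(1/202 : ℝ), (1/202 : ℝ), (50/101 : ℝ), (50/101 : ℝ)]
noncomputable def dv : Fin 4 → ℝ := ![(1/100 : ℝ), (1/100 : ℝ), (1 : ℝ), (1 : ℝ)]
noncomputable def Cmat : Matrix (Fin 4) (Fin 4) ℝ := !![(-101/100 : ℝ), (1 : ℝ), (0 : ℝ), (0 : ℝ); (0 : ℝ), (-101/100 : ℝ), (1 : ℝ), (0 : ℝ); (0 : ℝ), (0 : ℝ), (-2 : ℝ), (1 : ℝ); (1 : ℝ), (0 : ℝ), (0 : ℝ), (-2 : ℝ)]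
noncomputable def A2mat : Matrix (Fin 4) (Fin 4) ℝ := !![(-101/50 : ℝ), (2 : ℝ), (0 : ℝ), (0 : ℝ); (0 : ℝ), (-101/50 : ℝ), (2 : ℝ), (0 : ℝ); (0 : ℝ), (0 : ℝ), (-4 : ℝ), (2 : ℝ); (2 : ℝ), (0 : ℝ), (0 : ℝ), (-4 : ℝ)]
noncomputable def A3mat : Matrix (Fin 4) (Fin 4) ℝ := !![(-303/100 : ℝ), (3 : ℝ), (0 : ℝ), (0 : ℝ); (0 : ℝ), (-303/100 : ℝ), (3 : ℝ), (0 : ℝ); (0 : ℝ), (0 : ℝ), (-6 : ℝ), (3 : ℝ); (3 : ℝ), (0 : ℝ), (0 : ℝ), (-6 : ℝ)]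
noncomputable def Ninv : Matrix (Fin 4) (Fin 4) ℝ := !![(10100/7701 : ℝ), (10000/7701 : ℝ), (5000/7701 : ℝ), (2500/7701 : ℝ); (2500/7701 : ℝ), (10100/7701 : ℝ), (5050/7701 : ℝ), (2525/7701 : ℝ); (2525/7701 : ℝ), (2500/7701 : ℝ), (10201/15402 : ℝ), (10201/30804 : ℝ); (5050/7701 : ℝ), (5000/7701 : ℝ), (2500/7701 : ℝ), (10201/15402 : ℝ)]
noncomputable def Pmat : Matrix (Fin 4) (Fin 4) ℝ := !![(101/7701 : ℝ), (100/7701 : ℝ), (5000/7701 : ℝ), (2500/7701 : ℝ); (25/7701 : ℝ), (101/7701 : ℝ), (5050/7701 : ℝ), (2525/7701 : ℝ); (101/30804 : ℝ), (25/7701 : ℝ), (10201/15402 : ℝ), (10201/30804 : ℝ); (101/15402 : ℝ), (50/7701 : ℝ), (2500/7701 : ℝ), (10201/15402 : ℝ)]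


lemma sums2 :
    (∑ k ∈ Finset.range 22, (k ! : ℝ)⁻¹ * ((av ᵥ* A2mat ^ k) ⬝ᵥ dv)) = (27420546488829159366251410759402164838740195927480265009999/246056802718289062500000000000000000000000000000000000000000 : ℝ) ∧
      (∑ k ∈ Finset.range 22, (k ! : ℝ)⁻¹ * ((av ᵥ* A2mat ^ k) ⬝ᵥ (1 : Fin 4 → ℝ))) = (817950600137477671345237719295418520639474993025846957549/2460568027182890625000000000000000000000000000000000000000 : ℝ) := by
  have h0 : av ᵥ* A2mat ^ 0 = av := by rw [pow_zero, Matrix.vecMul_one]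
  have step : ∀ (n : ℕ) (v w : Fin 4 → ℝ), av ᵥ* A2mat ^ n = v → v ᵥ* A2mat = w → av ᵥ* A2mat ^ (n+1) = w := by
    intro n v w hv hw; rw [pow_succ, ← Matrix.vecMul_vecMul, hv, hw]
  have h1 : av ᵥ* A2mat ^ 1 = ![(9899/10100 : ℝ), (-1/10100 : ℝ), (-199/101 : ℝ), (-100/101 : ℝ)] := step 0 _ _ h0 (by
    funext i; fin_cases i <;> simp [av, dv, A2mat, A3mat, Matrix.vecMul, dotProduct, Fin.sum_univ_four, Matrix.vecHead, Matrix.vecTail] <;> norm_num)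
  have h2 : av ᵥ* A2mat ^ 2 = ![(-1999799/505000 : ℝ), (990001/505000 : ℝ), (39799/5050 : ℝ), (2/101 : ℝ)] := step 1 _ _ h1 (by
    funext i; fin_cases i <;> simp [av, dv, A2mat, A3mat, Matrix.vecMul, dotProduct, Fin.sum_univ_four, Matrix.vecHead, Matrix.vecTail] <;> norm_num)
  have h3 : av ᵥ* A2mat ^ 3 = ![(202979699/25250000 : ℝ), (-299970001/25250000 : ℝ), (-6969799/252500 : ℝ), (39599/2525 : ℝ)] := step 2 _ _ h2 (by
    funext i; fin_cases i <;> simp [av, dv, A2mat, A3mat, Matrix.vecMul, dotProduct, Fin.sum_univ_four, Matrix.vecHead, Matrix.vecTail] <;> norm_num)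
  have h4 : av ᵥ* A2mat ^ 4 = ![(19098050401/1262500000 : ℝ), (50594940001/1262500000 : ℝ), (1093989799/12625000 : ℝ), (-14889599/126250 : ℝ)] := step 3 _ _ h3 (by
    funext i; fin_cases i <;> simp [av, dv, A2mat, A3mat, Matrix.vecMul, dotProduct, Fin.sum_univ_four, Matrix.vecHead, Matrix.vecTail] <;> norm_num)
  have h5 : av ᵥ* A2mat ^ 5 = ![(-16818502090501/63125000000 : ℝ), (-3200283900001/63125000000 : ℝ), (-168203019799/631250000 : ℝ), (4071909599/6312500 : ℝ)] := step 4 _ _ h4 (by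
    funext i; fin_cases i <;> simp [av, dv, A2mat, A3mat, Matrix.vecMul, dotProduct, Fin.sum_univ_four, Matrix.vecHead, Matrix.vecTail] <;> norm_num)
  have h6 : av ᵥ* A2mat ^ 6 = ![(5770578310140601/3156250000000 : ℝ), (-1358621535149999/3156250000000 : ℝ), (30440320059799/31562500000 : ℝ), (-982584939599/315625000 : ℝ)] := step 5 _ _ h5 (by
    funext i; fin_cases i <;> simp [av, dv, A2mat, A3mat, Matrix.vecMul, dotProduct, Fin.sum_univ_four, Matrix.vecHead, Matrix.vecTail] <;> norm_num)
  have h7 : av ᵥ* A2mat ^ 7 = ![(-1565413348923200701/157812500000000 : ℝ), (714278606064209999/157812500000000 : ℝ), (-7446685547109799/1578125000000 : ℝ), (226957307979599/15781250000 : ℝ)] := step 6 _ _ h6 (by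
    funext i; fin_cases i <;> simp [av, dv, A2mat, A3mat, Matrix.vecMul, dotProduct, Fin.sum_univ_four, Matrix.vecHead, Matrix.vecTail] <;> norm_num)
  have h8 : av ᵥ* A2mat ^ 8 = ![(385064056220842270801/7890625000000000 : ℝ), (-228683474104805279999/7890625000000000 : ℝ), (2203615715486169799/78906250000000 : ℝ), (-52838147143029599/789062500000 : ℝ)] := step 7 _ _ h7 (by
    funext i; fin_cases i <;> simp [av, dv, A2mat, A3mat, Matrix.vecMul, dotProduct, Fin.sum_univ_four, Matrix.vecHead, Matrix.vecTail] <;> norm_num)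
  have h9 : av ᵥ* A2mat ^ 9 = ![(-91729616821334668350901/394531250000000000 : ℝ), (61603436506669560359999/394531250000000000 : ℝ), (-669406617202039239799/3945312500000000 : ℝ), (12771245144092089599/39453125000000 : ℝ)] := step 8 _ _ h8 (by
    funext i; fin_cases i <;> simp [av, dv, A2mat, A3mat, Matrix.vecMul, dotProduct, Fin.sum_univ_four, Matrix.vecHead, Matrix.vecTail] <;> norm_num)
  have h10 : av ᵥ* A2mat ^ 10 = ![(22035936443046891102441001/19726562500000000000 : ℝ), (-15394908769307092431449999/19726562500000000000 : ℝ), (195484759947077408319799/197265625000000000 : ℝ), (-3223655646020457159599/1972656250000000 : ℝ)] := step 9 _ _ h9 (by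
    funext i; fin_cases i <;> simp [av, dv, A2mat, A3mat, Matrix.vecMul, dotProduct, Fin.sum_univ_four, Matrix.vecHead, Matrix.vecTail] <;> norm_num)
  have h11 : av ᵥ* A2mat ^ 11 = ![(-5449285226768193160945541101/986328125000000000000 : ℝ), (3758479430004705445820549999/986328125000000000000 : ℝ), (-54491860758722574095409799/9863281250000000000 : ℝ), (840215889151168840239599/98632812500000000 : ℝ)] := step 10 _ _ h10 (by
    funext i; fin_cases i <;> simp [av, dv, A2mat, A3mat, Matrix.vecMul, dotProduct, Fin.sum_univ_four, Matrix.vecHead, Matrix.vecTail] <;> norm_num)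
  have h12 : av ᵥ* A2mat ^ 12 = ![(1390593697054756349495098651201/49316406250000000000000 : ℝ), (-924534945107294566122429659999/49316406250000000000000 : ℝ), (14656851581749220264902509799/493164062500000000000 : ℝ), (-222535038588956342143329599/4931640625000000000 : ℝ)] := step 11 _ _ h11 (by
    funext i; fin_cases i <;> simp [av, dv, A2mat, A3mat, Matrix.vecMul, dotProduct, Fin.sum_univ_four, Matrix.vecHead, Matrix.vecTail] <;> norm_num)
  have h13 : av ᵥ* A2mat ^ 13 = ![(-362985001991486733442334562771301/2465820312500000000000000 : ℝ), (232437399161312386127875260779999/2465820312500000000000000 : ℝ), (-3855905261457138619102931619799/24658203125000000000000 : ℝ), (59163859299540488693568429599/246582031250000000000 : ℝ)] := step 12 _ _ h12 (by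
    funext i; fin_cases i <;> simp [av, dv, A2mat, A3mat, Matrix.vecMul, dotProduct, Fin.sum_univ_four, Matrix.vecHead, Matrix.vecTail] <;> norm_num)
  have h14 : av ᵥ* A2mat ^ 14 = ![(95825344500680648771244220438901401/123291015625000000000000000 : ℝ), (-59774677514441224343148857615909999/123291015625000000000000000 : ℝ), (1003618451452740109948461584739799/1232910156250000000000000 : ℝ), (-15688677121365236357816617539599/12329101562500000000000 : ℝ)] := step 13 _ _ h13 (by
    funext i; fin_cases i <;> simp [av, dv, A2mat, A3mat, Matrix.vecMul, dotProduct, Fin.sum_univ_four, Matrix.vecHead, Matrix.vecTail] <;> norm_num)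
  have h15 : av ᵥ* A2mat ^ 15 = ![(-25367036915933981883712283803928041501/6164550781250000000000000000 : ℝ), (15619776879026628535782456663097049999/6164550781250000000000000000 : ℝ), (-260498367804989246332841174563869799/61645507812500000000000000 : ℝ), (4141353875725787381511785092659599/616455078125000000000000 : ℝ)] := step 14 _ _ h14 (by
    funext i; fin_cases i <;> simp [av, dv, A2mat, A3mat, Matrix.vecMul, dotProduct, Fin.sum_univ_four, Matrix.vecHead, Matrix.vecTail] <;> norm_num)
  have h16 : av ᵥ* A2mat ^ 16 = ![(6703424604235119551766725756856331191601/308227539062500000000000000000 : ℝ), (-4114301156375087670485256503365606199999/308227539062500000000000000000 : ℝ), (67719450440024477802350691575871009799/3082275390625000000000000000 : ℝ), (-1088769142950146722635198193095789599/30822753906250000000000000 : ℝ)] := step 15 _ _ h15 (by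
    funext i; fin_cases i <;> simp [av, dv, A2mat, A3mat, Matrix.vecMul, dotProduct, Fin.sum_univ_four, Matrix.vecHead, Matrix.vecTail] <;> norm_num)
  have h17 : av ᵥ* A2mat ^ 17 = ![(-1765815027977893797363637494538279049351701/15411376953125000000000000000000 : ℝ), (1085886877217395809895683482525559345359999/15411376953125000000000000000000 : ℝ), (-17658191244379983230955394818539808159799/154113769531250000000000000000 : ℝ), (285473279030053822329390330195028929599/1541137695312500000000000000 : ℝ)] := step 16 _ _ h16 (by
    funext i; fin_cases i <;> simp [av, dv, A2mat, A3mat, Matrix.vecMul, dotProduct, Fin.sum_univ_four, Matrix.vecHead, Matrix.vecTail] <;> norm_num)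
  have h18 : av ᵥ* A2mat ^ 18 = ![(463820596855821095863117717143395113583521801/770568847656250000000000000000000 : ℝ), (-286256077396746356535827781188909398816529999/770568847656250000000000000000000 : ℝ), (4617525126093392456086762446233520977319799/7705688476562500000000000000000 : ℝ), (-74752847050390747696833460857545594079599/77056884765625000000000000000 : ℝ)] := step 17 _ _ h17 (by
    funext i; fin_cases i <;> simp [av, dv, A2mat, A3mat, Matrix.vecMul, dotProduct, Fin.sum_univ_four, Matrix.vecHead, Matrix.vecTail] <;> norm_num)
  have h19 : av ᵥ* A2mat ^ 19 = ![(-121598727332828678379008350289028500551534701901/38528442382812500000000000000000000 : ℝ), (75293923502653491596430377614419360638821709999/38528442382812500000000000000000000 : ℝ), (-1209761102615424847753180270435613594280489799/385284423828125000000000000000000 : ℝ), (19568094536171541995453454617742639793239599/3852844238281250000000000000000 : ℝ)] := step 18 _ _ h18 (by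
    funext i; fin_cases i <;> simp [av, dv, A2mat, A3mat, Matrix.vecMul, dotProduct, Fin.sum_univ_four, Matrix.vecHead, Matrix.vecTail] <;> norm_num)
  have h20 : av ᵥ* A2mat ^ 20 = ![(31849565996787238511733297996934518348944603892001/1926422119140625000000000000000000000 : ℝ), (-19764559007050870489140303167959205479674462899999/1926422119140625000000000000000000000 : ℝ), (317246144025738461147066431701542079494919669799/19264221191406250000000000000000000 : ℝ), (-5123380009849733246843871193984141552928409599/192642211914062500000000000000000 : ℝ)] := step 19 _ _ h19 (by
    funext i; fin_cases i <;> simp [av, dv, A2mat, A3mat, Matrix.vecMul, dotProduct, Fin.sum_univ_four, Matrix.vecHead, Matrix.vecTail] <;> norm_num)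
  have h21 : av ᵥ* A2mat ^ 21 = ![(-8340186175525244336528934291674527906171814592092101/96321105957031250000000000000000000000 : ℝ), (5181177059390861770576500419657331588341581142099999/96321105957031250000000000000000000000 : ℝ), (-83213787812198562718553589508267621378658396859799/963211059570312500000000000000000000 : ℝ), (1341922145995685110515840670498370390080601589599/9632110595703125000000000000000000 : ℝ)] := step 20 _ _ h20 (by
    funext i; fin_cases i <;> simp [av, dv, A2mat, A3mat, Matrix.vecMul, dotProduct, Fin.sum_univ_four, Matrix.vecHead, Matrix.vecTail] <;> norm_num)
  have cd0 : av ⬝ᵥ dv = (10001/10100 : ℝ) := by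
    simp [av, dv, dotProduct, Fin.sum_univ_four]; norm_num
  have cg0 : av ⬝ᵥ (1 : Fin 4 → ℝ) = (1 : ℝ) := by
    simp [av, dotProduct, Fin.sum_univ_four]; norm_num
  have cd1 : (![(9899/10100 : ℝ), (-1/10100 : ℝ), (-199/101 : ℝ), (-100/101 : ℝ)] : Fin 4 → ℝ) ⬝ᵥ dv = (-1490051/505000 : ℝ) := by
    simp [av, dv, dotProduct, Fin.sum_univ_four]; norm_num
  have cg1 : (![(9899/10100 : ℝ), (-1/10100 : ℝ), (-199/101 : ℝ), (-100/101 : ℝ)] : Fin 4 → ℝ) ⬝ᵥ (1 : Fin 4 → ℝ) = (-10001/5050 : ℝ) := by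
    simp [av, dotProduct, Fin.sum_univ_four]; norm_num
  have cd2 : (![(-1999799/505000 : ℝ), (990001/505000 : ℝ), (39799/5050 : ℝ), (2/101 : ℝ)] : Fin 4 → ℝ) ⬝ᵥ dv = (198990101/25250000 : ℝ) := by
    simp [av, dv, dotProduct, Fin.sum_univ_four]; norm_num
  have cg2 : (![(-1999799/505000 : ℝ), (990001/505000 : ℝ), (39799/5050 : ℝ), (2/101 : ℝ)] : Fin 4 → ℝ) ⬝ᵥ (1 : Fin 4 → ℝ) = (1490051/252500 : ℝ) := by
    simp [av, dotProduct, Fin.sum_univ_four]; norm_num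
  have cd3 : (![(202979699/25250000 : ℝ), (-299970001/25250000 : ℝ), (-6969799/252500 : ℝ), (39599/2525 : ℝ)] : Fin 4 → ℝ) ⬝ᵥ dv = (-149485051/12500000 : ℝ) := by
    simp [av, dv, dotProduct, Fin.sum_univ_four]; norm_num
  have cg3 : (![(202979699/25250000 : ℝ), (-299970001/25250000 : ℝ), (-6969799/252500 : ℝ), (39599/2525 : ℝ)] : Fin 4 → ℝ) ⬝ᵥ (1 : Fin 4 → ℝ) = (-198990101/12625000 : ℝ) := by
    simp [av, dotProduct, Fin.sum_univ_four]; norm_num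
  have cd4 : (![(19098050401/1262500000 : ℝ), (50594940001/1262500000 : ℝ), (1093989799/12625000 : ℝ), (-14889599/126250 : ℝ)] : Fin 4 → ℝ) ⬝ᵥ dv = (-1940004009799/63125000000 : ℝ) := by
    simp [av, dv, dotProduct, Fin.sum_univ_four]; norm_num
  have cg4 : (![(19098050401/1262500000 : ℝ), (50594940001/1262500000 : ℝ), (1093989799/12625000 : ℝ), (-14889599/126250 : ℝ)] : Fin 4 → ℝ) ⬝ᵥ (1 : Fin 4 → ℝ) = (149485051/6250000 : ℝ) := by
    simp [av, dotProduct, Fin.sum_univ_four]; norm_num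
  have cd5 : (![(-16818502090501/63125000000 : ℝ), (-3200283900001/63125000000 : ℝ), (-168203019799/631250000 : ℝ), (4071909599/6312500 : ℝ)] : Fin 4 → ℝ) ⬝ᵥ dv = (1184930307509749/3156250000000 : ℝ) := by
    simp [av, dv, dotProduct, Fin.sum_univ_four]; norm_num
  have cg5 : (![(-16818502090501/63125000000 : ℝ), (-3200283900001/63125000000 : ℝ), (-168203019799/631250000 : ℝ), (4071909599/6312500 : ℝ)] : Fin 4 → ℝ) ⬝ᵥ (1 : Fin 4 → ℝ) = (1940004009799/31562500000 : ℝ) := by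
    simp [av, dotProduct, Fin.sum_univ_four]; norm_num
  have cd6 : (![(5770578310140601/3156250000000 : ℝ), (-1358621535149999/3156250000000 : ℝ), (30440320059799/31562500000 : ℝ), (-982584939599/315625000 : ℝ)] : Fin 4 → ℝ) ⬝ᵥ dv = (-336884891113009699/157812500000000 : ℝ) := by
    simp [av, dv, dotProduct, Fin.sum_univ_four]; norm_num
  have cg6 : (![(5770578310140601/3156250000000 : ℝ), (-1358621535149999/3156250000000 : ℝ), (30440320059799/31562500000 : ℝ), (-982584939599/315625000 : ℝ)] : Fin 4 → ℝ) ⬝ᵥ (1 : Fin 4 → ℝ) = (-1184930307509749/1578125000000 : ℝ) := by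
    simp [av, dotProduct, Fin.sum_univ_four]; norm_num
  have cd7 : (![(-1565413348923200701/157812500000000 : ℝ), (714278606064209999/157812500000000 : ℝ), (-7446685547109799/1578125000000 : ℝ), (226957307979599/15781250000 : ℝ)] : Fin 4 → ℝ) ⬝ᵥ dv = (75819658882821009649/7890625000000000 : ℝ) := by
    simp [av, dv, dotProduct, Fin.sum_univ_four]; norm_num
  have cg7 : (![(-1565413348923200701/157812500000000 : ℝ), (714278606064209999/157812500000000 : ℝ), (-7446685547109799/1578125000000 : ℝ), (226957307979599/15781250000 : ℝ)] : Fin 4 → ℝ) ⬝ᵥ (1 : Fin 4 → ℝ) = (336884891113009699/78906250000000 : ℝ) := by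
    simp [av, dotProduct, Fin.sum_univ_four]; norm_num
  have cd8 : (![(385064056220842270801/7890625000000000 : ℝ), (-228683474104805279999/7890625000000000 : ℝ), (2203615715486169799/78906250000000 : ℝ), (-52838147143029599/789062500000 : ℝ)] : Fin 4 → ℝ) ⬝ᵥ dv = (-15322804703025932009599/394531250000000000 : ℝ) := by
    simp [av, dv, dotProduct, Fin.sum_univ_four]; norm_num
  have cg8 : (![(385064056220842270801/7890625000000000 : ℝ), (-228683474104805279999/7890625000000000 : ℝ), (2203615715486169799/78906250000000 : ℝ), (-52838147143029599/789062500000 : ℝ)] : Fin 4 → ℝ) ⬝ᵥ (1 : Fin 4 → ℝ) = (-75819658882821009649/3945312500000000 : ℝ) := by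
    simp [av, dotProduct, Fin.sum_univ_four]; norm_num
  have cd9 : (![(-91729616821334668350901/394531250000000000 : ℝ), (61603436506669560359999/394531250000000000 : ℝ), (-669406617202039239799/3945312500000000 : ℝ), (12771245144092089599/39453125000000 : ℝ)] : Fin 4 → ℝ) ⬝ᵥ dv = (3023526395878516046509549/19726562500000000000 : ℝ) := by
    simp [av, dv, dotProduct, Fin.sum_univ_four]; norm_num
  have cg9 : (![(-91729616821334668350901/394531250000000000 : ℝ), (61603436506669560359999/394531250000000000 : ℝ), (-669406617202039239799/3945312500000000 : ℝ), (12771245144092089599/39453125000000 : ℝ)] : Fin 4 → ℝ) ⬝ᵥ (1 : Fin 4 → ℝ) = (15322804703025932009599/197265625000000000 : ℝ) := by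
    simp [av, dotProduct, Fin.sum_univ_four]; norm_num
  have cd10 : (![(22035936443046891102441001/19726562500000000000 : ℝ), (-15394908769307092431449999/19726562500000000000 : ℝ), (195484759947077408319799/197265625000000000 : ℝ), (-3223655646020457159599/1972656250000000 : ℝ)] : Fin 4 → ℝ) ⬝ᵥ dv = (-631083509437971638865009499/986328125000000000000 : ℝ) := by
    simp [av, dv, dotProduct, Fin.sum_univ_four]; norm_num
  have cg10 : (![(22035936443046891102441001/19726562500000000000 : ℝ), (-15394908769307092431449999/19726562500000000000 : ℝ), (195484759947077408319799/197265625000000000 : ℝ), (-3223655646020457159599/1972656250000000 : ℝ)] : Fin 4 → ℝ) ⬝ᵥ (1 : Fin 4 → ℝ) = (-3023526395878516046509549/9863281250000000000 : ℝ) := by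
    simp [av, dotProduct, Fin.sum_univ_four]; norm_num
  have cd11 : (![(-5449285226768193160945541101/986328125000000000000 : ℝ), (3758479430004705445820549999/986328125000000000000 : ℝ), (-54491860758722574095409799/9863281250000000000 : ℝ), (840215889151168840239599/98632812500000000 : ℝ)] : Fin 4 → ℝ) ⬝ᵥ dv = (146803237883589805785188009449/49316406250000000000000 : ℝ) := by
    simp [av, dv, dotProduct, Fin.sum_univ_four]; norm_num
  have cg11 : (![(-5449285226768193160945541101/986328125000000000000 : ℝ), (3758479430004705445820549999/986328125000000000000 : ℝ), (-54491860758722574095409799/9863281250000000000 : ℝ), (840215889151168840239599/98632812500000000 : ℝ)] : Fin 4 → ℝ) ⬝ᵥ (1 : Fin 4 → ℝ) = (631083509437971638865009499/493164062500000000000 : ℝ) := by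
    simp [av, dotProduct, Fin.sum_univ_four]; norm_num
  have cd12 : (![(1390593697054756349495098651201/49316406250000000000000 : ℝ), (-924534945107294566122429659999/49316406250000000000000 : ℝ), (14656851581749220264902509799/493164062500000000000 : ℝ), (-222535038588956342143329599/4931640625000000000 : ℝ)] : Fin 4 → ℝ) ⬝ᵥ dv = (-37750232009758338855465916009399/2465820312500000000000000 : ℝ) := by
    simp [av, dv, dotProduct, Fin.sum_univ_four]; norm_num
  have cg12 : (![(1390593697054756349495098651201/49316406250000000000000 : ℝ), (-924534945107294566122429659999/49316406250000000000000 : ℝ), (14656851581749220264902509799/493164062500000000000 : ℝ), (-222535038588956342143329599/4931640625000000000 : ℝ)] : Fin 4 → ℝ) ⬝ᵥ (1 : Fin 4 → ℝ) = (-146803237883589805785188009449/24658203125000000000000 : ℝ) := by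
    simp [av, dotProduct, Fin.sum_univ_four]; norm_num
  have cd13 : (![(-362985001991486733442334562771301/2465820312500000000000000 : ℝ), (232437399161312386127875260779999/2465820312500000000000000 : ℝ), (-3855905261457138619102931619799/24658203125000000000000 : ℝ), (59163859299540488693568429599/246582031250000000000 : ℝ)] : Fin 4 → ℝ) ⬝ᵥ dv = (10237129541069464077612327049509349/123291015625000000000000000 : ℝ) := by
    simp [av, dv, dotProduct, Fin.sum_univ_four]; norm_num
  have cg13 : (![(-362985001991486733442334562771301/2465820312500000000000000 : ℝ), (232437399161312386127875260779999/2465820312500000000000000 : ℝ), (-3855905261457138619102931619799/24658203125000000000000 : ℝ), (59163859299540488693568429599/246582031250000000000 : ℝ)] : Fin 4 → ℝ) ⬝ᵥ (1 : Fin 4 → ℝ) = (37750232009758338855465916009399/1232910156250000000000000 : ℝ) := by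
    simp [av, dotProduct, Fin.sum_univ_four]; norm_num
  have cd14 : (![(95825344500680648771244220438901401/123291015625000000000000000 : ℝ), (-59774677514441224343148857615909999/123291015625000000000000000 : ℝ), (1003618451452740109948461584739799/1232910156250000000000000 : ℝ), (-15688677121365236357816617539599/12329101562500000000000 : ℝ)] : Fin 4 → ℝ) ⬝ᵥ dv = (-2808220969925797916951953164689009299/6164550781250000000000000000 : ℝ) := by
    simp [av, dv, dotProduct, Fin.sum_univ_four]; norm_num
  have cg14 : (![(95825344500680648771244220438901401/123291015625000000000000000 : ℝ), (-59774677514441224343148857615909999/123291015625000000000000000 : ℝ), (1003618451452740109948461584739799/1232910156250000000000000 : ℝ), (-15688677121365236357816617539599/12329101562500000000000 : ℝ)] : Fin 4 → ℝ) ⬝ᵥ (1 : Fin 4 → ℝ) = (-10237129541069464077612327049509349/61645507812500000000000000 : ℝ) := by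
    simp [av, dotProduct, Fin.sum_univ_four]; norm_num
  have cd15 : (![(-25367036915933981883712283803928041501/6164550781250000000000000000 : ℝ), (15619776879026628535782456663097049999/6164550781250000000000000000 : ℝ), (-260498367804989246332841174563869799/61645507812500000000000000 : ℝ), (4141353875725787381511785092659599/616455078125000000000000 : ℝ)] : Fin 4 → ℝ) ⬝ᵥ dv = (763311468819493782417721759940035009249/308227539062500000000000000000 : ℝ) := by
    simp [av, dv, dotProduct, Fin.sum_univ_four]; norm_num
  have cg15 : (![(-25367036915933981883712283803928041501/6164550781250000000000000000 : ℝ), (15619776879026628535782456663097049999/6164550781250000000000000000 : ℝ), (-260498367804989246332841174563869799/61645507812500000000000000 : ℝ), (4141353875725787381511785092659599/616455078125000000000000 : ℝ)] : Fin 4 → ℝ) ⬝ᵥ (1 : Fin 4 → ℝ) = (2808220969925797916951953164689009299/3082275390625000000000000000 : ℝ) := by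
    simp [av, dotProduct, Fin.sum_univ_four]; norm_num
  have cd16 : (![(6703424604235119551766725756856331191601/308227539062500000000000000000 : ℝ), (-4114301156375087670485256503365606199999/308227539062500000000000000000 : ℝ), (67719450440024477802350691575871009799/3082275390625000000000000000 : ℝ), (-1088769142950146722635198193095789599/30822753906250000000000000 : ℝ)] : Fin 4 → ℝ) ⬝ᵥ dv = (-204492757551020956365204904041794388009199/15411376953125000000000000000000 : ℝ) := by
    simp [av, dv, dotProduct, Fin.sum_univ_four]; norm_num
  have cg16 : (![(6703424604235119551766725756856331191601/308227539062500000000000000000 : ℝ), (-4114301156375087670485256503365606199999/308227539062500000000000000000 : ℝ), (67719450440024477802350691575871009799/3082275390625000000000000000 : ℝ), (-1088769142950146722635198193095789599/30822753906250000000000000 : ℝ)] : Fin 4 → ℝ) ⬝ᵥ (1 : Fin 4 → ℝ) = (-763311468819493782417721759940035009249/154113769531250000000000000000 : ℝ) := by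
    simp [av, dotProduct, Fin.sum_univ_four]; norm_num
  have cd17 : (![(-1765815027977893797363637494538279049351701/15411376953125000000000000000000 : ℝ), (1085886877217395809895683482525559345359999/15411376953125000000000000000000 : ℝ), (-17658191244379983230955394818539808159799/154113769531250000000000000000 : ℝ), (285473279030053822329390330195028929599/1541137695312500000000000000 : ℝ)] : Fin 4 → ℝ) ⬝ᵥ dv = (54105719217746746016184213998809064148509149/770568847656250000000000000000000 : ℝ) := by
    simp [av, dv, dotProduct, Fin.sum_univ_four]; norm_num
  have cg17 : (![(-1765815027977893797363637494538279049351701/15411376953125000000000000000000 : ℝ), (1085886877217395809895683482525559345359999/15411376953125000000000000000000 : ℝ), (-17658191244379983230955394818539808159799/154113769531250000000000000000 : ℝ), (285473279030053822329390330195028929599/1541137695312500000000000000 : ℝ)] : Fin 4 → ℝ) ⬝ᵥ (1 : Fin 4 → ℝ) = (204492757551020956365204904041794388009199/7705688476562500000000000000000 : ℝ) := by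
    simp [av, dotProduct, Fin.sum_univ_four]; norm_num
  have cd18 : (![(463820596855821095863117717143395113583521801/770568847656250000000000000000000 : ℝ), (-286256077396746356535827781188909398816529999/770568847656250000000000000000000 : ℝ), (4617525126093392456086762446233520977319799/7705688476562500000000000000000 : ℝ), (-74752847050390747696833460857545594079599/77056884765625000000000000000 : ℝ)] : Fin 4 → ℝ) ⬝ᵥ dv = (-14200015634998874198319273229627949295817009099/38528442382812500000000000000000000 : ℝ) := by
    simp [av, dv, dotProduct, Fin.sum_univ_four]; norm_num
  have cg18 : (![(463820596855821095863117717143395113583521801/770568847656250000000000000000000 : ℝ), (-286256077396746356535827781188909398816529999/770568847656250000000000000000000 : ℝ), (4617525126093392456086762446233520977319799/7705688476562500000000000000000 : ℝ), (-74752847050390747696833460857545594079599/77056884765625000000000000000 : ℝ)] : Fin 4 → ℝ) ⬝ᵥ (1 : Fin 4 → ℝ) = (-54105719217746746016184213998809064148509149/385284423828125000000000000000000 : ℝ) := by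
    simp [av, dotProduct, Fin.sum_univ_four]; norm_num
  have cd19 : (![(-121598727332828678379008350289028500551534701901/38528442382812500000000000000000000 : ℝ), (75293923502653491596430377614419360638821709999/38528442382812500000000000000000000 : ℝ), (-1209761102615424847753180270435613594280489799/385284423828125000000000000000000 : ℝ), (19568094536171541995453454617742639793239599/3852844238281250000000000000000 : ℝ)] : Fin 4 → ℝ) ⬝ᵥ dv = (3712089353093559165569536970355947355260994009049/1926422119140625000000000000000000000 : ℝ) := by
    simp [av, dv, dotProduct, Fin.sum_univ_four]; norm_num
  have cg19 : (![(-121598727332828678379008350289028500551534701901/38528442382812500000000000000000000 : ℝ), (75293923502653491596430377614419360638821709999/38528442382812500000000000000000000 : ℝ), (-1209761102615424847753180270435613594280489799/385284423828125000000000000000000 : ℝ), (19568094536171541995453454617742639793239599/3852844238281250000000000000000 : ℝ)] : Fin 4 → ℝ) ⬝ᵥ (1 : Fin 4 → ℝ) = (14200015634998874198319273229627949295817009099/19264221191406250000000000000000000 : ℝ) := by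
    simp [av, dotProduct, Fin.sum_univ_four]; norm_num
  have cd20 : (![(31849565996787238511733297996934518348944603892001/1926422119140625000000000000000000000 : ℝ), (-19764559007050870489140303167959205479674462899999/1926422119140625000000000000000000000 : ℝ), (317246144025738461147066431701542079494919669799/19264221191406250000000000000000000 : ℝ), (-5123380009849733246843871193984141552928409599/192642211914062500000000000000000 : ℝ)] : Fin 4 → ℝ) ⬝ᵥ dv = (-969416781301306133675306941069872722554971380008999/96321105957031250000000000000000000000 : ℝ) := by
    simp [av, dv, dotProduct, Fin.sum_univ_four]; norm_num
  have cg20 : (![(31849565996787238511733297996934518348944603892001/1926422119140625000000000000000000000 : ℝ), (-19764559007050870489140303167959205479674462899999/1926422119140625000000000000000000000 : ℝ), (317246144025738461147066431701542079494919669799/19264221191406250000000000000000000 : ℝ), (-5123380009849733246843871193984141552928409599/192642211914062500000000000000000 : ℝ)] : Fin 4 → ℝ) ⬝ᵥ (1 : Fin 4 → ℝ) = (-3712089353093559165569536970355947355260994009049/963211059570312500000000000000000000 : ℝ) := by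
    simp [av, dotProduct, Fin.sum_univ_four]; norm_num
  have cd21 : (![(-8340186175525244336528934291674527906171814592092101/96321105957031250000000000000000000000 : ℝ), (5181177059390861770576500419657331588341581142099999/96321105957031250000000000000000000000 : ℝ), (-83213787812198562718553589508267621378658396859799/963211059570312500000000000000000000 : ℝ), (1341922145995685110515840670498370390080601589599/9632110595703125000000000000000000 : ℝ)] : Fin 4 → ℝ) ⬝ᵥ dv = (253312629378782550382176170771838489988093693775508949/4816055297851562500000000000000000000000 : ℝ) := by
    simp [av, dv, dotProduct, Fin.sum_univ_four]; norm_num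
  have cg21 : (![(-8340186175525244336528934291674527906171814592092101/96321105957031250000000000000000000000 : ℝ), (5181177059390861770576500419657331588341581142099999/96321105957031250000000000000000000000 : ℝ), (-83213787812198562718553589508267621378658396859799/963211059570312500000000000000000000 : ℝ), (1341922145995685110515840670498370390080601589599/9632110595703125000000000000000000 : ℝ)] : Fin 4 → ℝ) ⬝ᵥ (1 : Fin 4 → ℝ) = (969416781301306133675306941069872722554971380008999/48160552978515625000000000000000000000 : ℝ) := by
    simp [av, dotProduct, Fin.sum_univ_four]; norm_num
  constructor
  · simp only [Finset.sum_range_succ, Finset.sum_range_zero, h0, h1, h2, h3, h4, h5, h6, h7, h8, h9, h10, h11, h12, h13, h14, h15, h16, h17, h18, h19, h20, h21, cd0, cd1, cd2, cd3, cd4, cd5, cd6, cd7, cd8, cd9, cd10, cd11, cd12, cd13, cd14, cd15, cd16, cd17, cd18, cd19, cd20, cd21]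
    norm_num [Nat.factorial]
  · simp only [Finset.sum_range_succ, Finset.sum_range_zero, h0, h1, h2, h3, h4, h5, h6, h7, h8, h9, h10, h11, h12, h13, h14, h15, h16, h17, h18, h19, h20, h21, cg0, cg1, cg2, cg3, cg4, cg5, cg6, cg7, cg8, cg9, cg10, cg11, cg12, cg13, cg14, cg15, cg16, cg17, cg18, cg19, cg20, cg21]
    norm_num [Nat.factorial]

lemma sums3 :
    (∑ k ∈ Finset.range 30, (k ! : ℝ)⁻¹ * ((av ᵥ* A3mat ^ k) ⬝ᵥ dv)) = (2054333063798171592132299315927543079326832799889358499029201053176762345559002821223/24353200628450197504000000000000000000000000000000000000000000000000000000000000000000 : ℝ) ∧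
      (∑ k ∈ Finset.range 30, (k ! : ℝ)⁻¹ * ((av ᵥ* A3mat ^ k) ⬝ᵥ (1 : Fin 4 → ℝ))) = (1321104206045629758808902721942007833751032364198880926814913724698927944523510209179/5601236144543545425920000000000000000000000000000000000000000000000000000000000000000 : ℝ) := by
  have h0 : av ᵥ* A3mat ^ 0 = av := by rw [pow_zero, Matrix.vecMul_one]
  have step : ∀ (n : ℕ) (v w : Fin 4 → ℝ), av ᵥ* A3mat ^ n = v → v ᵥ* A3mat = w → av ᵥ* A3mat ^ (n+1) = w := by
    intro n v w hv hw; rw [pow_succ, ← Matrix.vecMul_vecMul, hv, hw]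
  have h1 : av ᵥ* A3mat ^ 1 = ![(29697/20200 : ℝ), (-3/20200 : ℝ), (-597/202 : ℝ), (-150/101 : ℝ)] := step 0 _ _ h0 (by
    funext i; fin_cases i <;> simp [av, dv, A2mat, A3mat, Matrix.vecMul, dotProduct, Fin.sum_univ_four, Matrix.vecHead, Matrix.vecTail] <;> norm_num)
  have h2 : av ᵥ* A3mat ^ 2 = ![(-17998191/2020000 : ℝ), (8910009/2020000 : ℝ), (358191/20200 : ℝ), (9/202 : ℝ)] := step 1 _ _ h1 (by
    funext i; fin_cases i <;> simp [av, dv, A2mat, A3mat, Matrix.vecMul, dotProduct, Fin.sum_univ_four, Matrix.vecHead, Matrix.vecTail] <;> norm_num)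
  have h3 : av ᵥ* A3mat ^ 3 = ![(5480451873/202000000 : ℝ), (-8099190027/202000000 : ℝ), (-188184573/2020000 : ℝ), (1069173/20200 : ℝ)] := step 2 _ _ h2 (by
    funext i; fin_cases i <;> simp [av, dv, A2mat, A3mat, Matrix.vecMul, dotProduct, Fin.sum_univ_four, Matrix.vecHead, Matrix.vecTail] <;> norm_num)
  have h4 : av ᵥ* A3mat ^ 4 = ![(1546942082481/20200000000 : ℝ), (4098190140081/20200000000 : ℝ), (88613173719/202000000 : ℝ), (-1206057519/2020000 : ℝ)] := step 3 _ _ h3 (by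
    funext i; fin_cases i <;> simp [av, dv, A2mat, A3mat, Matrix.vecMul, dotProduct, Fin.sum_univ_four, Matrix.vecHead, Matrix.vecTail] <;> norm_num)
  have h5 : av ᵥ* A3mat ^ 5 = ![(-4086896007991743/2020000000000 : ℝ), (-777668987700243/2020000000000 : ℝ), (-40873333811157/20200000000 : ℝ), (989474032557/202000000 : ℝ)] := step 4 _ _ h4 (by
    funext i; fin_cases i <;> simp [av, dv, A2mat, A3mat, Matrix.vecMul, dotProduct, Fin.sum_univ_four, Matrix.vecHead, Matrix.vecTail] <;> norm_num)
  have h6 : av ᵥ* A3mat ^ 6 = ![(4206751588092498129/202000000000000 : ℝ), (-990435099124349271/202000000000000 : ℝ), (22190993323593471/2020000000000 : ℝ), (-716304420967671/20200000000 : ℝ)] := step 5 _ _ h5 (by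
    funext i; fin_cases i <;> simp [av, dv, A2mat, A3mat, Matrix.vecMul, dotProduct, Fin.sum_univ_four, Matrix.vecHead, Matrix.vecTail] <;> norm_num)
  have h7 : av ᵥ* A3mat ^ 7 = ![(-3423558994095039933087/20200000000000000 : ℝ), (1562127311462427267813/20200000000000000 : ℝ), (-16285901291529130413/202000000000000 : ℝ), (496355632551383013/2020000000000 : ℝ)] := step 6 _ _ h6 (by
    funext i; fin_cases i <;> simp [av, dv, A2mat, A3mat, Matrix.vecMul, dotProduct, Fin.sum_univ_four, Matrix.vecHead, Matrix.vecTail] <;> norm_num)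
  have h8 : av ᵥ* A3mat ^ 8 = ![(2526405272864946138725361/2020000000000000000 : ℝ), (-1500392273601627442073439/2020000000000000000 : ℝ), (14457922709304760051239/20200000000000000 : ℝ), (-346671083405417199039/202000000000000 : ℝ)] := step 7 _ _ h7 (by
    funext i; fin_cases i <;> simp [av, dv, A2mat, A3mat, Matrix.vecMul, dotProduct, Fin.sum_univ_four, Matrix.vecHead, Matrix.vecTail] <;> norm_num)
  have h9 : av ᵥ* A3mat ^ 9 = ![(-1805514047894330277150784383/202000000000000000000 : ℝ), (1212540440760776956565860317/202000000000000000000 : ℝ), (-13175930446387738356963717/2020000000000000000 : ℝ), (251376418171164599577117/20200000000000000 : ℝ)] := step 8 _ _ h8 (by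
    funext i; fin_cases i <;> simp [av, dv, A2mat, A3mat, Matrix.vecMul, dotProduct, Fin.sum_univ_four, Matrix.vecHead, Matrix.vecTail] <;> norm_num)
  have h10 : av ᵥ* A3mat ^ 10 = ![(1301200011025475872708038668049/20200000000000000000000 : ℝ), (-909053967918814500984690990951/20200000000000000000000 : ℝ), (11543179590114973883875811151/202000000000000000000 : ℝ), (-190353642241861974817161351/2020000000000000000 : ℝ)] := step 9 _ _ h9 (by
    funext i; fin_cases i <;> simp [av, dv, A2mat, A3mat, Matrix.vecMul, dotProduct, Fin.sum_univ_four, Matrix.vecHead, Matrix.vecTail] <;> norm_num)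
  have h11 : av ᵥ* A3mat ^ 11 = ![(-965324530066305113882019769418847/2020000000000000000000000 : ℝ), (665803355587043555610772970672853/2020000000000000000000000 : ℝ), (-9653069657825427833279559663453/20200000000000000000000 : ℝ), (148841724115462106541924244053/202000000000000000000 : ℝ)] := step 10 _ _ h10 (by
    funext i; fin_cases i <;> simp [av, dv, A2mat, A3mat, Matrix.vecMul, dotProduct, Fin.sum_univ_four, Matrix.vecHead, Matrix.vecTail] <;> norm_num)
  have h12 : av ᵥ* A3mat ^ 12 = ![(739018504956476769132024722292910641/202000000000000000000000000 : ℝ), (-491335775762765731514670140939528559/202000000000000000000000000 : ℝ), (7789251861456387366800054710090359/2020000000000000000000000 : ℝ), (-118264243442753547424993225422159/20200000000000000000000 : ℝ)] := step 11 _ _ h11 (by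
    funext i; fin_cases i <;> simp [av, dv, A2mat, A3mat, Matrix.vecMul, dotProduct, Fin.sum_univ_four, Matrix.vecHead, Matrix.vecTail] <;> norm_num)
  have h13 : av ᵥ* A3mat ^ 13 = ![(-578715337330073103321983167121228924223/20200000000000000000000000000 : ℝ), (370580291543061047388552469392550345677/20200000000000000000000000000 : ℝ), (-6147558444162129614624043248872801077/202000000000000000000000000 : ℝ), (94326301650021290555396099383566477/2020000000000000000000000 : ℝ)] := step 12 _ _ h12 (by
    funext i; fin_cases i <;> simp [av, dv, A2mat, A3mat, Matrix.vecMul, dotProduct, Fin.sum_univ_four, Matrix.vecHead, Matrix.vecTail] <;> norm_num)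
  have h14 : av ᵥ* A3mat ^ 14 = ![(458329652161076021972749197788431795039569/2020000000000000000000000000000 : ℝ), (-285900429536569428355326348362311432007031/2020000000000000000000000000000 : ℝ), (4800275941126460910940083357501331683231/20200000000000000000000000000 : ℝ), (-75038456322499163177109789376758289431/202000000000000000000000000 : ℝ)] := step 13 _ _ h13 (by
    funext i; fin_cases i <;> simp [av, dv, A2mat, A3mat, Matrix.vecMul, dotProduct, Fin.sum_univ_four, Matrix.vecHead, Matrix.vecTail] <;> norm_num)
  have h15 : av ᵥ* A3mat ^ 15 = ![(-363989253572303524189072375060169702189989407/202000000000000000000000000000000 : ℝ), (224126725797903343383488642890309902410001093/202000000000000000000000000000000 : ℝ), (-3737866853285584831630029059587733305959693/2020000000000000000000000000000 : ℝ), (59423901616878880639086123698558968708293/20200000000000000000000000000 : ℝ)] := step 14 _ _ h14 (by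
    funext i; fin_cases i <;> simp [av, dv, A2mat, A3mat, Matrix.vecMul, dotProduct, Fin.sum_univ_four, Matrix.vecHead, Matrix.vecTail] <;> norm_num)
  have h16 : av ᵥ* A3mat ^ 16 = ![(288560448683044609746547300738908325888445790321/20200000000000000000000000000000000 : ℝ), (-177107173988455770301918771313814811087227153279/20200000000000000000000000000000000 : ℝ), (2915100289365060929128483364423569690805819079/202000000000000000000000000000000 : ℝ), (-46867941529984082878341761397898581142854879/2020000000000000000000000000000 : ℝ)] := step 15 _ _ h15 (by
    funext i; fin_cases i <;> simp [av, dv, A2mat, A3mat, Matrix.vecMul, dotProduct, Fin.sum_univ_four, Matrix.vecHead, Matrix.vecTail] <;> norm_num)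
  have h17 : av ᵥ* A3mat ^ 17 = ![(-228037640540914765388229116317584966172763711467263/2020000000000000000000000000000000000 : ℝ), (140231608323415481325445577929758385525963564539837/2020000000000000000000000000000000000 : ℝ), (-2280381695584403868382846332595586247745172907237/20200000000000000000000000000000000 : ℝ), (36866065786085632514390506932009857758130384637/202000000000000000000000000000000 : ℝ)] := step 16 _ _ h16 (by
    funext i; fin_cases i <;> simp [av, dv, A2mat, A3mat, Matrix.vecMul, dotProduct, Fin.sum_univ_four, Matrix.vecHead, Matrix.vecTail] <;> norm_num)
  have h18 : av ᵥ* A3mat ^ 18 = ![(179693602442154071455804943040257818024738558485580689/202000000000000000000000000000000000000 : ℝ), (-110901469484269320458078745007992280666196073495749511/202000000000000000000000000000000000000 : ℝ), (1788923842320888765006044533346626905224994437961711/2020000000000000000000000000000000000 : ℝ), (-28960784558404591113782843156992673398113749503911/20200000000000000000000000000000000 : ℝ)] := step 17 _ _ h17 (by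
    funext i; fin_cases i <;> simp [av, dv, A2mat, A3mat, Matrix.vecMul, dotProduct, Fin.sum_univ_four, Matrix.vecHead, Matrix.vecTail] <;> norm_num)
  have h19 : av ᵥ* A3mat ^ 19 = ![(-141329515215186456992457427212176139055837031732863948767/20200000000000000000000000000000000000000 : ℝ), (87511225986379825535539342649499006449278977814886308533/20200000000000000000000000000000000000000 : ℝ), (-1406058713845341220377862955031952985133584883264275133/202000000000000000000000000000000000000 : ℝ), (22743242262005420963287839494235484754543233016231733/2020000000000000000000000000000000000 : ℝ)] := step 18 _ _ h18 (by
    funext i; fin_cases i <;> simp [av, dv, A2mat, A3mat, Matrix.vecMul, dotProduct, Fin.sum_univ_four, Matrix.vecHead, Matrix.vecTail] <;> norm_num)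
  have h20 : av ᵥ* A3mat ^ 20 = ![(111052569896217759358578118927995824397548319663752975476401/2020000000000000000000000000000000000000000 : ℝ), (-68914756038429024235005648986451040670882639797769736115599/2020000000000000000000000000000000000000000 : ℝ), (1106168906266344208833335800967668810427987863403224005399/20200000000000000000000000000000000000000 : ℝ), (-17864121498739276239106292561637149808126694459531865199/202000000000000000000000000000000000000 : ℝ)] := step 19 _ _ h19 (by
    funext i; fin_cases i <;> simp [av, dv, A2mat, A3mat, Matrix.vecMul, dotProduct, Fin.sum_univ_four, Matrix.vecHead, Matrix.vecTail] <;> norm_num)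
  have h21 : av ᵥ* A3mat ^ 21 = ![(-87241293174771809802968047720094184216837224236712747166349503/202000000000000000000000000000000000000000000 : ℝ), (54196942048509322150780147321293412642541935757850122685946797/202000000000000000000000000000000000000000000 : ℝ), (-870445611875093598005018427539954408269440637435243611586197/2020000000000000000000000000000000000000000 : ℝ), (14036979618042598369963782939885296316159980265928791135597/20200000000000000000000000000000000000000 : ℝ)] := step 20 _ _ h20 (by
    funext i; fin_cases i <;> simp [av, dv, A2mat, A3mat, Matrix.vecMul, dotProduct, Fin.sum_univ_four, Matrix.vecHead, Matrix.vecTail] <;> norm_num)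
  have h22 : av ᵥ* A3mat ^ 22 = ![(68545050686083653480190667278844426766181619741510335798194899409/20200000000000000000000000000000000000000000000 : ℝ), (-42594061393129867552576798954380159295741373805642411323746730391/20200000000000000000000000000000000000000000000 : ℝ), (684858193270584125255351498487852882889290189734696535009558591/202000000000000000000000000000000000000000000 : ℝ), (-11033524606450839815993325046551041014504310071863005516116791/2020000000000000000000000000000000000000000 : ℝ)] := step 21 _ _ h21 (by
    funext i; fin_cases i <;> simp [av, dv, A2mat, A3mat, Matrix.vecMul, dotProduct, Fin.sum_univ_four, Matrix.vecHead, Matrix.vecTail] <;> norm_num)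
  have h23 : av ᵥ* A3mat ^ 23 = ![(-53869724177235866452477747325142984353665960997266648295203427520927/2020000000000000000000000000000000000000000000000 : ℝ), (33469515807943445912487970266830516296464122185562751370553729131173/2020000000000000000000000000000000000000000000000 : ℝ), (-538697100141740077810941295955852207620798235257745154976975345773/20200000000000000000000000000000000000000000000 : ℝ), (8674689343682256265362049523394183257370456612321892914698750373/202000000000000000000000000000000000000000000 : ℝ)] := step 22 _ _ h22 (by
    funext i; fin_cases i <;> simp [av, dv, A2mat, A3mat, Matrix.vecMul, dotProduct, Fin.sum_univ_four, Matrix.vecHead, Matrix.vecTail] <;> norm_num)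
  have h24 : av ᵥ* A3mat ^ 24 = ![(42346594456749236331186906009700874031272156019137473177542889657840881/202000000000000000000000000000000000000000000000000 : ℝ), (-26302180542977624047227179188392541743928417321405508153838808183023519/202000000000000000000000000000000000000000000000000 : ℝ), (423626807508874384424028688374002873461871307711335347097846394857319/2020000000000000000000000000000000000000000000000 : ℝ), (-6820904906634573992650053601904066577284668673166371213750176261119/20200000000000000000000000000000000000000000000 : ℝ)] := step 23 _ _ h23 (by
    funext i; fin_cases i <;> simp [av, dv, A2mat, A3mat, Matrix.vecMul, dotProduct, Fin.sum_univ_four, Matrix.vecHead, Matrix.vecTail] <;> norm_num)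
  have h25 : av ᵥ* A3mat ^ 25 = ![(-33293732840298740586299793326651564563329469293297768014046024349682786943/20200000000000000000000000000000000000000000000000000 : ℝ), (20673539041546990985665907096993202357791957254127110923876025776808390557/20200000000000000000000000000000000000000000000000000 : ℝ), (-333082626134257502796098750589579349308908036591017732720224261463461957/202000000000000000000000000000000000000000000000000 : ℝ), (5363423366507367548862118226264448566756415127033828769543644941243357/2020000000000000000000000000000000000000000000000 : ℝ)] := step 24 _ _ h24 (by
    funext i; fin_cases i <;> simp [av, dv, A2mat, A3mat, Matrix.vecMul, dotProduct, Fin.sum_univ_four, Matrix.vecHead, Matrix.vecTail] <;> norm_num)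
  have h26 : av ᵥ* A3mat ^ 26 = ![(26178271150132621044235192056768769762958074576970710016886880201683955443729/2020000000000000000000000000000000000000000000000000000 : ℝ), (-16252202181678360444546707848384409683409803835989845014148243115277778421671/2020000000000000000000000000000000000000000000000000000 : ℝ), (261870192805195474634656971644727216658720693716991972403762634208502345871/20200000000000000000000000000000000000000000000000000 : ℝ), (-4217301898307193037705567187527407187980573185993350459886859749136400071/202000000000000000000000000000000000000000000000000 : ℝ)] := step 25 _ _ h25 (by
    funext i; fin_cases i <;> simp [av, dv, A2mat, A3mat, Matrix.vecMul, dotProduct, Fin.sum_univ_four, Matrix.vecHead, Matrix.vecTail] <;> norm_num)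
  have h27 : av ᵥ* A3mat ^ 27 = ![(-20583921853411763289519964755783158802118016154802176514777303948519438712449887/202000000000000000000000000000000000000000000000000000000 : ℝ), (12777898606088329527968210095091107062960592935396136044352981724434353494885013/202000000000000000000000000000000000000000000000000000000 : ℝ), (-205878722228152366114434306531989559045461827738164718484702309870934742787613/2020000000000000000000000000000000000000000000000000000 : ℝ), (3315991717399902246527311227450625962764505992746986193143403752107347080213/20200000000000000000000000000000000000000000000000000 : ℝ)] := step 26 _ _ h26 (by
    funext i; fin_cases i <;> simp [av, dv, A2mat, A3mat, Matrix.vecMul, dotProduct, Fin.sum_univ_four, Matrix.vecHead, Matrix.vecTail] <;> norm_num)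
  have h28 : av ᵥ* A3mat ^ 28 = ![(16184903473783471016306483003354175005335276873146018063407734352723431170511315761/20200000000000000000000000000000000000000000000000000000000 : ℝ), (-10046879833668292833830357085547553080712464505865682175872144647059440722685125039/20200000000000000000000000000000000000000000000000000000000 : ℝ), (161860929155156408252565214204467056616158875449087239223880331095863906157222839/202000000000000000000000000000000000000000000000000000000 : ℝ), (-2607231197124398446259689656066344254795089078862685871340149180877212476490639/2020000000000000000000000000000000000000000000000000000 : ℝ)] := step 27 _ _ h27 (by
    funext i; fin_cases i <;> simp [av, dv, A2mat, A3mat, Matrix.vecMul, dotProduct, Fin.sum_univ_four, Matrix.vecHead, Matrix.vecTail] <;> norm_num)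
  have h29 : av ᵥ* A3mat ^ 29 = ![(-12725719343929587056719933318215347791001856129151301087232991051506837074136845675583/2020000000000000000000000000000000000000000000000000000000000 : ℝ), (7899675631736534033542543097927161085056459807221107118311580133876039890126987615117/2020000000000000000000000000000000000000000000000000000000000 : ℝ), (-127257196994098723453030199779322893211832718787049390061944632598696665862389078517/20200000000000000000000000000000000000000000000000000000000 : ℝ), (2049921505740108292513509436253207722725530073664873240475730501813919204366051917/202000000000000000000000000000000000000000000000000000000 : ℝ)] := step 28 _ _ h28 (by
    funext i; fin_cases i <;> simp [av, dv, A2mat, A3mat, Matrix.vecMul, dotProduct, Fin.sum_univ_four, Matrix.vecHead, Matrix.vecTail] <;> norm_num)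
  have cd0 : av ⬝ᵥ dv = (10001/10100 : ℝ) := by
    simp [av, dv, dotProduct, Fin.sum_univ_four]; norm_num
  have cg0 : av ⬝ᵥ (1 : Fin 4 → ℝ) = (1 : ℝ) := by
    simp [av, dotProduct, Fin.sum_univ_four]; norm_num
  have cd1 : (![(29697/20200 : ℝ), (-3/20200 : ℝ), (-597/202 : ℝ), (-150/101 : ℝ)] : Fin 4 → ℝ) ⬝ᵥ dv = (-4470153/1010000 : ℝ) := by
    simp [av, dv, dotProduct, Fin.sum_univ_four]; norm_num
  have cg1 : (![(29697/20200 : ℝ), (-3/20200 : ℝ), (-597/202 : ℝ), (-150/101 : ℝ)] : Fin 4 → ℝ) ⬝ᵥ (1 : Fin 4 → ℝ) = (-30003/10100 : ℝ) := by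
    simp [av, dotProduct, Fin.sum_univ_four]; norm_num
  have cd2 : (![(-17998191/2020000 : ℝ), (8910009/2020000 : ℝ), (358191/20200 : ℝ), (9/202 : ℝ)] : Fin 4 → ℝ) ⬝ᵥ dv = (1790910909/101000000 : ℝ) := by
    simp [av, dv, dotProduct, Fin.sum_univ_four]; norm_num
  have cg2 : (![(-17998191/2020000 : ℝ), (8910009/2020000 : ℝ), (358191/20200 : ℝ), (9/202 : ℝ)] : Fin 4 → ℝ) ⬝ᵥ (1 : Fin 4 → ℝ) = (13410459/1010000 : ℝ) := by
    simp [av, dotProduct, Fin.sum_univ_four]; norm_num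
  have cd3 : (![(5480451873/202000000 : ℝ), (-8099190027/202000000 : ℝ), (-188184573/2020000 : ℝ), (1069173/20200 : ℝ)] : Fin 4 → ℝ) ⬝ᵥ dv = (-4036096377/100000000 : ℝ) := by
    simp [av, dv, dotProduct, Fin.sum_univ_four]; norm_num
  have cg3 : (![(5480451873/202000000 : ℝ), (-8099190027/202000000 : ℝ), (-188184573/2020000 : ℝ), (1069173/20200 : ℝ)] : Fin 4 → ℝ) ⬝ᵥ (1 : Fin 4 → ℝ) = (-5372732727/101000000 : ℝ) := by
    simp [av, dotProduct, Fin.sum_univ_four]; norm_num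
  have cd4 : (![(1546942082481/20200000000 : ℝ), (4098190140081/20200000000 : ℝ), (88613173719/202000000 : ℝ), (-1206057519/2020000 : ℝ)] : Fin 4 → ℝ) ⬝ᵥ dv = (-157140324793719/1010000000000 : ℝ) := by
    simp [av, dv, dotProduct, Fin.sum_univ_four]; norm_num
  have cg4 : (![(1546942082481/20200000000 : ℝ), (4098190140081/20200000000 : ℝ), (88613173719/202000000 : ℝ), (-1206057519/2020000 : ℝ)] : Fin 4 → ℝ) ⬝ᵥ (1 : Fin 4 → ℝ) = (12108289131/100000000 : ℝ) := by
    simp [av, dotProduct, Fin.sum_univ_four]; norm_num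
  have cd5 : (![(-4086896007991743/2020000000000 : ℝ), (-777668987700243/2020000000000 : ℝ), (-40873333811157/20200000000 : ℝ), (989474032557/202000000 : ℝ)] : Fin 4 → ℝ) ⬝ᵥ dv = (287938064724869007/101000000000000 : ℝ) := by
    simp [av, dv, dotProduct, Fin.sum_univ_four]; norm_num
  have cg5 : (![(-4086896007991743/2020000000000 : ℝ), (-777668987700243/2020000000000 : ℝ), (-40873333811157/20200000000 : ℝ), (989474032557/202000000 : ℝ)] : Fin 4 → ℝ) ⬝ᵥ (1 : Fin 4 → ℝ) = (471420974381157/1010000000000 : ℝ) := by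
    simp [av, dotProduct, Fin.sum_univ_four]; norm_num
  have cd6 : (![(4206751588092498129/202000000000000 : ℝ), (-990435099124349271/202000000000000 : ℝ), (22190993323593471/2020000000000 : ℝ), (-716304420967671/20200000000 : ℝ)] : Fin 4 → ℝ) ⬝ᵥ dv = (-245589085621384070571/10100000000000000 : ℝ) := by
    simp [av, dv, dotProduct, Fin.sum_univ_four]; norm_num
  have cg6 : (![(4206751588092498129/202000000000000 : ℝ), (-990435099124349271/202000000000000 : ℝ), (22190993323593471/2020000000000 : ℝ), (-716304420967671/20200000000 : ℝ)] : Fin 4 → ℝ) ⬝ᵥ (1 : Fin 4 → ℝ) = (-863814194174607021/101000000000000 : ℝ) := by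
    simp [av, dotProduct, Fin.sum_univ_four]; norm_num
  have cd7 : (![(-3423558994095039933087/20200000000000000 : ℝ), (1562127311462427267813/20200000000000000 : ℝ), (-16285901291529130413/202000000000000 : ℝ), (496355632551383013/2020000000000 : ℝ)] : Fin 4 → ℝ) ⬝ᵥ dv = (165817593976729548102363/1010000000000000000 : ℝ) := by
    simp [av, dv, dotProduct, Fin.sum_univ_four]; norm_num
  have cg7 : (![(-3423558994095039933087/20200000000000000 : ℝ), (1562127311462427267813/20200000000000000 : ℝ), (-16285901291529130413/202000000000000 : ℝ), (496355632551383013/2020000000000 : ℝ)] : Fin 4 → ℝ) ⬝ᵥ (1 : Fin 4 → ℝ) = (736767256864152211713/10100000000000000 : ℝ) := by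
    simp [av, dotProduct, Fin.sum_univ_four]; norm_num
  have cd8 : (![(2526405272864946138725361/2020000000000000000 : ℝ), (-1500392273601627442073439/2020000000000000000 : ℝ), (14457922709304760051239/20200000000000000 : ℝ), (-346671083405417199039/202000000000000 : ℝ)] : Fin 4 → ℝ) ⬝ᵥ dv = (-100532921656553139914979039/101000000000000000000 : ℝ) := by
    simp [av, dv, dotProduct, Fin.sum_univ_four]; norm_num
  have cg8 : (![(2526405272864946138725361/2020000000000000000 : ℝ), (-1500392273601627442073439/2020000000000000000 : ℝ), (14457922709304760051239/20200000000000000 : ℝ), (-346671083405417199039/202000000000000 : ℝ)] : Fin 4 → ℝ) ⬝ᵥ (1 : Fin 4 → ℝ) = (-497452781930188644307089/1010000000000000000 : ℝ) := by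
    simp [av, dotProduct, Fin.sum_univ_four]; norm_num
  have cd9 : (![(-1805514047894330277150784383/202000000000000000000 : ℝ), (1212540440760776956565860317/202000000000000000000 : ℝ), (-13175930446387738356963717/2020000000000000000 : ℝ), (251376418171164599577117/20200000000000000 : ℝ)] : Fin 4 → ℝ) ⬝ᵥ dv = (59512070050076831343447452967/10100000000000000000000 : ℝ) := by
    simp [av, dv, dotProduct, Fin.sum_univ_four]; norm_num
  have cg9 : (![(-1805514047894330277150784383/202000000000000000000 : ℝ), (1212540440760776956565860317/202000000000000000000 : ℝ), (-13175930446387738356963717/2020000000000000000 : ℝ), (251376418171164599577117/20200000000000000 : ℝ)] : Fin 4 → ℝ) ⬝ᵥ (1 : Fin 4 → ℝ) = (301598764969659419744937117/101000000000000000000 : ℝ) := by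
    simp [av, dotProduct, Fin.sum_univ_four]; norm_num
  have cd10 : (![(1301200011025475872708038668049/20200000000000000000000 : ℝ), (-909053967918814500984690990951/20200000000000000000000 : ℝ), (11543179590114973883875811151/202000000000000000000 : ℝ), (-190353642241861974817161351/2020000000000000000 : ℝ)] : Fin 4 → ℝ) ⬝ᵥ dv = (-37264850148802787303339945906451/1010000000000000000000000 : ℝ) := by
    simp [av, dv, dotProduct, Fin.sum_univ_four]; norm_num
  have cg10 : (![(1301200011025475872708038668049/20200000000000000000000 : ℝ), (-909053967918814500984690990951/20200000000000000000000 : ℝ), (11543179590114973883875811151/202000000000000000000 : ℝ), (-190353642241861974817161351/2020000000000000000 : ℝ)] : Fin 4 → ℝ) ⬝ᵥ (1 : Fin 4 → ℝ) = (-178536210150230494030342358901/10100000000000000000000 : ℝ) := by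
    simp [av, dotProduct, Fin.sum_univ_four]; norm_num
  have cd11 : (![(-965324530066305113882019769418847/2020000000000000000000000 : ℝ), (665803355587043555610772970672853/2020000000000000000000000 : ℝ), (-9653069657825427833279559663453/20200000000000000000000 : ℝ), (148841724115462106541924244053/202000000000000000000 : ℝ)] : Fin 4 → ℝ) ⬝ᵥ dv = (26005753181364283325428700309862003/101000000000000000000000000 : ℝ) := by
    simp [av, dv, dotProduct, Fin.sum_univ_four]; norm_num
  have cg11 : (![(-965324530066305113882019769418847/2020000000000000000000000 : ℝ), (665803355587043555610772970672853/2020000000000000000000000 : ℝ), (-9653069657825427833279559663453/20200000000000000000000 : ℝ), (148841724115462106541924244053/202000000000000000000 : ℝ)] : Fin 4 → ℝ) ⬝ᵥ (1 : Fin 4 → ℝ) = (111794550446408361910019837719353/1010000000000000000000000 : ℝ) := by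
    simp [av, dotProduct, Fin.sum_univ_four]; norm_num
  have cd12 : (![(739018504956476769132024722292910641/202000000000000000000000000 : ℝ), (-491335775762765731514670140939528559/202000000000000000000000000 : ℝ), (7789251861456387366800054710090359/2020000000000000000000000 : ℝ), (-118264243442753547424993225422159/20200000000000000000000 : ℝ)] : Fin 4 → ℝ) ⬝ᵥ dv = (-20062021049497981359687661869951013959/10100000000000000000000000000 : ℝ) := by
    simp [av, dv, dotProduct, Fin.sum_univ_four]; norm_num
  have cg12 : (![(739018504956476769132024722292910641/202000000000000000000000000 : ℝ), (-491335775762765731514670140939528559/202000000000000000000000000 : ℝ), (7789251861456387366800054710090359/2020000000000000000000000 : ℝ), (-118264243442753547424993225422159/20200000000000000000000 : ℝ)] : Fin 4 → ℝ) ⬝ᵥ (1 : Fin 4 → ℝ) = (-78017259544092849976286100929586009/101000000000000000000000000 : ℝ) := by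
    simp [av, dotProduct, Fin.sum_univ_four]; norm_num
  have cd13 : (![(-578715337330073103321983167121228924223/20200000000000000000000000000 : ℝ), (370580291543061047388552469392550345677/20200000000000000000000000000 : ℝ), (-6147558444162129614624043248872801077/202000000000000000000000000 : ℝ), (94326301650021290555396099383566477/2020000000000000000000000 : ℝ)] : Fin 4 → ℝ) ⬝ᵥ dv = (16321291081306491176611118098554893825727/1010000000000000000000000000000 : ℝ) := by
    simp [av, dv, dotProduct, Fin.sum_univ_four]; norm_num
  have cg13 : (![(-578715337330073103321983167121228924223/20200000000000000000000000000 : ℝ), (370580291543061047388552469392550345677/20200000000000000000000000000 : ℝ), (-6147558444162129614624043248872801077/202000000000000000000000000 : ℝ), (94326301650021290555396099383566477/2020000000000000000000000 : ℝ)] : Fin 4 → ℝ) ⬝ᵥ (1 : Fin 4 → ℝ) = (60186063148493944079062985609853041877/10100000000000000000000000000 : ℝ) := by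
    simp [av, dotProduct, Fin.sum_univ_four]; norm_num
  have cd14 : (![(458329652161076021972749197788431795039569/2020000000000000000000000000000 : ℝ), (-285900429536569428355326348362311432007031/2020000000000000000000000000000 : ℝ), (4800275941126460910940083357501331683231/20200000000000000000000000000 : ℝ), (-75038456322499163177109789376758289431/202000000000000000000000000 : ℝ)] : Fin 4 → ℝ) ⬝ᵥ dv = (-13431633844305023737045766476159426117828731/101000000000000000000000000000000 : ℝ) := by
    simp [av, dv, dotProduct, Fin.sum_univ_four]; norm_num
  have cg14 : (![(458329652161076021972749197788431795039569/2020000000000000000000000000000 : ℝ), (-285900429536569428355326348362311432007031/2020000000000000000000000000000 : ℝ), (4800275941126460910940083357501331683231/20200000000000000000000000000 : ℝ), (-75038456322499163177109789376758289431/202000000000000000000000000 : ℝ)] : Fin 4 → ℝ) ⬝ᵥ (1 : Fin 4 → ℝ) = (-48963873243919473529833354295664681477181/1010000000000000000000000000000 : ℝ) := by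
    simp [av, dotProduct, Fin.sum_univ_four]; norm_num
  have cd15 : (![(-363989253572303524189072375060169702189989407/202000000000000000000000000000000 : ℝ), (224126725797903343383488642890309902410001093/202000000000000000000000000000000 : ℝ), (-3737866853285584831630029059587733305959693/2020000000000000000000000000000 : ℝ), (59423901616878880639086123698558968708293/20200000000000000000000000000 : ℝ)] : Fin 4 → ℝ) ⬝ᵥ dv = (10952685278124316070990124685255887924458040843/10100000000000000000000000000000000 : ℝ) := by
    simp [av, dv, dotProduct, Fin.sum_univ_four]; norm_num
  have cg15 : (![(-363989253572303524189072375060169702189989407/202000000000000000000000000000000 : ℝ), (224126725797903343383488642890309902410001093/202000000000000000000000000000000 : ℝ), (-3737866853285584831630029059587733305959693/2020000000000000000000000000000 : ℝ), (59423901616878880639086123698558968708293/20200000000000000000000000000 : ℝ)] : Fin 4 → ℝ) ⬝ᵥ (1 : Fin 4 → ℝ) = (40294901532915071211137299428478278353486193/101000000000000000000000000000000 : ℝ) := by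
    simp [av, dotProduct, Fin.sum_univ_four]; norm_num
  have cd16 : (![(288560448683044609746547300738908325888445790321/20200000000000000000000000000000000 : ℝ), (-177107173988455770301918771313814811087227153279/20200000000000000000000000000000000 : ℝ), (2915100289365060929128483364423569690805819079/202000000000000000000000000000000 : ℝ), (-46867941529984082878341761397898581142854879/2020000000000000000000000000000 : ℝ)] : Fin 4 → ℝ) ⬝ᵥ dv = (-8802742680819442373806149612118895359997734786479/1010000000000000000000000000000000000 : ℝ) := by
    simp [av, dv, dotProduct, Fin.sum_univ_four]; norm_num
  have cg16 : (![(288560448683044609746547300738908325888445790321/20200000000000000000000000000000000 : ℝ), (-177107173988455770301918771313814811087227153279/20200000000000000000000000000000000 : ℝ), (2915100289365060929128483364423569690805819079/202000000000000000000000000000000 : ℝ), (-46867941529984082878341761397898581142854879/2020000000000000000000000000000 : ℝ)] : Fin 4 → ℝ) ⬝ᵥ (1 : Fin 4 → ℝ) = (-32858055834372948212970374055767663773374122529/10100000000000000000000000000000000 : ℝ) := by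
    simp [av, dotProduct, Fin.sum_univ_four]; norm_num
  have cd17 : (![(-228037640540914765388229116317584966172763711467263/2020000000000000000000000000000000000 : ℝ), (140231608323415481325445577929758385525963564539837/2020000000000000000000000000000000000 : ℝ), (-2280381695584403868382846332595586247745172907237/20200000000000000000000000000000000 : ℝ), (36866065786085632514390506932009857758130384637/202000000000000000000000000000000 : ℝ)] : Fin 4 → ℝ) ⬝ᵥ dv = (6987221399012047273249630033833084350015927708851287/101000000000000000000000000000000000000 : ℝ) := by
    simp [av, dv, dotProduct, Fin.sum_univ_four]; norm_num
  have cg17 : (![(-228037640540914765388229116317584966172763711467263/2020000000000000000000000000000000000 : ℝ), (140231608323415481325445577929758385525963564539837/2020000000000000000000000000000000000 : ℝ), (-2280381695584403868382846332595586247745172907237/20200000000000000000000000000000000 : ℝ), (36866065786085632514390506932009857758130384637/202000000000000000000000000000000 : ℝ)] : Fin 4 → ℝ) ⬝ᵥ (1 : Fin 4 → ℝ) = (26408228042458327121418448836356686079993204359437/1010000000000000000000000000000000000 : ℝ) := by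
    simp [av, dotProduct, Fin.sum_univ_four]; norm_num
  have cd18 : (![(179693602442154071455804943040257818024738558485580689/202000000000000000000000000000000000000 : ℝ), (-110901469484269320458078745007992280666196073495749511/202000000000000000000000000000000000000 : ℝ), (1788923842320888765006044533346626905224994437961711/2020000000000000000000000000000000000 : ℝ), (-28960784558404591113782843156992673398113749503911/20200000000000000000000000000000000 : ℝ)] : Fin 4 → ℝ) ⬝ᵥ dv = (-5501377001118909356362335812747069404252631319652029411/10100000000000000000000000000000000000000 : ℝ) := by
    simp [av, dv, dotProduct, Fin.sum_univ_four]; norm_num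
  have cg18 : (![(179693602442154071455804943040257818024738558485580689/202000000000000000000000000000000000000 : ℝ), (-110901469484269320458078745007992280666196073495749511/202000000000000000000000000000000000000 : ℝ), (1788923842320888765006044533346626905224994437961711/2020000000000000000000000000000000000 : ℝ), (-28960784558404591113782843156992673398113749503911/20200000000000000000000000000000000 : ℝ)] : Fin 4 → ℝ) ⬝ᵥ (1 : Fin 4 → ℝ) = (-20961664197036141819748890101499253050047783126553861/101000000000000000000000000000000000000 : ℝ) := by
    simp [av, dotProduct, Fin.sum_univ_four]; norm_num
  have cd19 : (![(-141329515215186456992457427212176139055837031732863948767/20200000000000000000000000000000000000000 : ℝ), (87511225986379825535539342649499006449278977814886308533/20200000000000000000000000000000000000000 : ℝ), (-1406058713845341220377862955031952985133584883264275133/202000000000000000000000000000000000000 : ℝ), (22743242262005420963287839494235484754543233016231733/2020000000000000000000000000000000000 : ℝ)] : Fin 4 → ℝ) ⬝ᵥ dv = (4314418417161601064026145929676638885300413064835502014883/1010000000000000000000000000000000000000000 : ℝ) := by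
    simp [av, dv, dotProduct, Fin.sum_univ_four]; norm_num
  have cg19 : (![(-141329515215186456992457427212176139055837031732863948767/20200000000000000000000000000000000000000 : ℝ), (87511225986379825535539342649499006449278977814886308533/20200000000000000000000000000000000000000 : ℝ), (-1406058713845341220377862955031952985133584883264275133/202000000000000000000000000000000000000 : ℝ), (22743242262005420963287839494235484754543233016231733/2020000000000000000000000000000000000 : ℝ)] : Fin 4 → ℝ) ⬝ᵥ (1 : Fin 4 → ℝ) = (16504131003356728069087007438241208212757893958956088233/10100000000000000000000000000000000000000 : ℝ) := by
    simp [av, dotProduct, Fin.sum_univ_four]; norm_num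
  have cd20 : (![(111052569896217759358578118927995824397548319663752975476401/2020000000000000000000000000000000000000000 : ℝ), (-68914756038429024235005648986451040670882639797769736115599/2020000000000000000000000000000000000000000 : ℝ), (1106168906266344208833335800967668810427987863403224005399/20200000000000000000000000000000000000000 : ℝ), (-17864121498739276239106292561637149808126694459531865199/202000000000000000000000000000000000000 : ℝ)] : Fin 4 → ℝ) ⬝ᵥ dv = (-3380147311109022707824681041009458460060075072816820952824599/101000000000000000000000000000000000000000000 : ℝ) := by
    simp [av, dv, dotProduct, Fin.sum_univ_four]; norm_num
  have cg20 : (![(111052569896217759358578118927995824397548319663752975476401/2020000000000000000000000000000000000000000 : ℝ), (-68914756038429024235005648986451040670882639797769736115599/2020000000000000000000000000000000000000000 : ℝ), (1106168906266344208833335800967668810427987863403224005399/20200000000000000000000000000000000000000 : ℝ), (-17864121498739276239106292561637149808126694459531865199/202000000000000000000000000000000000000 : ℝ)] : Fin 4 → ℝ) ⬝ᵥ (1 : Fin 4 → ℝ) = (-12943255251484803192078437789029916655901239194506506044649/1010000000000000000000000000000000000000000 : ℝ) := by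
    simp [av, dotProduct, Fin.sum_univ_four]; norm_num
  have cd21 : (![(-87241293174771809802968047720094184216837224236712747166349503/202000000000000000000000000000000000000000000 : ℝ), (54196942048509322150780147321293412642541935757850122685946797/202000000000000000000000000000000000000000000 : ℝ), (-870445611875093598005018427539954408269440637435243611586197/2020000000000000000000000000000000000000000 : ℝ), (14036979618042598369963782939885296316159980265928791135597/20200000000000000000000000000000000000000 : ℝ)] : Fin 4 → ℝ) ⬝ᵥ dv = (2649739574082699951130705382043475730945639301548746197627313647/10100000000000000000000000000000000000000000000 : ℝ) := by
    simp [av, dv, dotProduct, Fin.sum_univ_four]; norm_num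
  have cg21 : (![(-87241293174771809802968047720094184216837224236712747166349503/202000000000000000000000000000000000000000000 : ℝ), (54196942048509322150780147321293412642541935757850122685946797/202000000000000000000000000000000000000000000 : ℝ), (-870445611875093598005018427539954408269440637435243611586197/2020000000000000000000000000000000000000000 : ℝ), (14036979618042598369963782939885296316159980265928791135597/20200000000000000000000000000000000000000 : ℝ)] : Fin 4 → ℝ) ⬝ᵥ (1 : Fin 4 → ℝ) = (10140441933327068123474043123028375380180225218450462858473797/101000000000000000000000000000000000000000000 : ℝ) := by
    simp [av, dotProduct, Fin.sum_univ_four]; norm_num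
  have cd22 : (![(68545050686083653480190667278844426766181619741510335798194899409/20200000000000000000000000000000000000000000000 : ℝ), (-42594061393129867552576798954380159295741373805642411323746730391/20200000000000000000000000000000000000000000000 : ℝ), (684858193270584125255351498487852882889290189734696535009558591/202000000000000000000000000000000000000000000 : ℝ), (-11033524606450839815993325046551041014504310071863005516116791/2020000000000000000000000000000000000000000 : ℝ)] : Fin 4 → ℝ) ⬝ᵥ dv = (-2079495842226022388756098096674023959070483964290086120773378460491/1010000000000000000000000000000000000000000000000 : ℝ) := by
    simp [av, dv, dotProduct, Fin.sum_univ_four]; norm_num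
  have cg22 : (![(68545050686083653480190667278844426766181619741510335798194899409/20200000000000000000000000000000000000000000000 : ℝ), (-42594061393129867552576798954380159295741373805642411323746730391/20200000000000000000000000000000000000000000000 : ℝ), (684858193270584125255351498487852882889290189734696535009558591/202000000000000000000000000000000000000000000 : ℝ), (-11033524606450839815993325046551041014504310071863005516116791/2020000000000000000000000000000000000000000 : ℝ)] : Fin 4 → ℝ) ⬝ᵥ (1 : Fin 4 → ℝ) = (-7949218722248099853392116146130427192836917904646238592881940941/10100000000000000000000000000000000000000000000 : ℝ) := by
    simp [av, dotProduct, Fin.sum_univ_four]; norm_num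
  have cd23 : (![(-53869724177235866452477747325142984353665960997266648295203427520927/2020000000000000000000000000000000000000000000000 : ℝ), (33469515807943445912487970266830516296464122185562751370553729131173/2020000000000000000000000000000000000000000000000 : ℝ), (-538697100141740077810941295955852207620798235257745154976975345773/20200000000000000000000000000000000000000000000 : ℝ), (8674689343682256265362049523394183257370456612321892914698750373/202000000000000000000000000000000000000000000 : ℝ)] : Fin 4 → ℝ) ⬝ᵥ dv = (1633659066947781533356323393388674356552636210466368734002173608440123/101000000000000000000000000000000000000000000000000 : ℝ) := by
    simp [av, dv, dotProduct, Fin.sum_univ_four]; norm_num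
  have cg23 : (![(-53869724177235866452477747325142984353665960997266648295203427520927/2020000000000000000000000000000000000000000000000 : ℝ), (33469515807943445912487970266830516296464122185562751370553729131173/2020000000000000000000000000000000000000000000000 : ℝ), (-538697100141740077810941295955852207620798235257745154976975345773/20200000000000000000000000000000000000000000000 : ℝ), (8674689343682256265362049523394183257370456612321892914698750373/202000000000000000000000000000000000000000000 : ℝ)] : Fin 4 → ℝ) ⬝ᵥ (1 : Fin 4 → ℝ) = (6238487526678067166268294290022071877211451892870258362320135381473/1010000000000000000000000000000000000000000000000 : ℝ) := by
    simp [av, dotProduct, Fin.sum_univ_four]; norm_num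
  have cd24 : (![(42346594456749236331186906009700874031272156019137473177542889657840881/202000000000000000000000000000000000000000000000000 : ℝ), (-26302180542977624047227179188392541743928417321405508153838808183023519/202000000000000000000000000000000000000000000000000 : ℝ), (423626807508874384424028688374002873461871307711335347097846394857319/2020000000000000000000000000000000000000000000000 : ℝ), (-6820904906634573992650053601904066577284668673166371213750176261119/20200000000000000000000000000000000000000000000 : ℝ)] : Fin 4 → ℝ) ⬝ᵥ dv = (-1284296208816029268062903495671364755189305928677642888874004115535496319/10100000000000000000000000000000000000000000000000000 : ℝ) := by
    simp [av, dv, dotProduct, Fin.sum_univ_four]; norm_num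
  have cg24 : (![(42346594456749236331186906009700874031272156019137473177542889657840881/202000000000000000000000000000000000000000000000000 : ℝ), (-26302180542977624047227179188392541743928417321405508153838808183023519/202000000000000000000000000000000000000000000000000 : ℝ), (423626807508874384424028688374002873461871307711335347097846394857319/2020000000000000000000000000000000000000000000000 : ℝ), (-6820904906634573992650053601904066577284668673166371213750176261119/20200000000000000000000000000000000000000000000 : ℝ)] : Fin 4 → ℝ) ⬝ᵥ (1 : Fin 4 → ℝ) = (-4900977200843344600068970180166023069657908631399106202006520825320369/101000000000000000000000000000000000000000000000000 : ℝ) := by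
    simp [av, dotProduct, Fin.sum_univ_four]; norm_num
  have cd25 : (![(-33293732840298740586299793326651564563329469293297768014046024349682786943/20200000000000000000000000000000000000000000000000000 : ℝ), (20673539041546990985665907096993202357791957254127110923876025776808390557/20200000000000000000000000000000000000000000000000000 : ℝ), (-333082626134257502796098750589579349308908036591017732720224261463461957/202000000000000000000000000000000000000000000000000 : ℝ), (5363423366507367548862118226264448566756415127033828769543644941243357/2020000000000000000000000000000000000000000000000 : ℝ)] : Fin 4 → ℝ) ⬝ᵥ dv = (1009988455683020385650248417069498355730898624542240392625616164017931516807/1010000000000000000000000000000000000000000000000000000 : ℝ) := by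
    simp [av, dv, dotProduct, Fin.sum_univ_four]; norm_num
  have cg25 : (![(-33293732840298740586299793326651564563329469293297768014046024349682786943/20200000000000000000000000000000000000000000000000000 : ℝ), (20673539041546990985665907096993202357791957254127110923876025776808390557/20200000000000000000000000000000000000000000000000000 : ℝ), (-333082626134257502796098750589579349308908036591017732720224261463461957/202000000000000000000000000000000000000000000000000 : ℝ), (5363423366507367548862118226264448566756415127033828769543644941243357/2020000000000000000000000000000000000000000000000 : ℝ)] : Fin 4 → ℝ) ⬝ᵥ (1 : Fin 4 → ℝ) = (3852888626448087804188710487014094265567917786032928666622012346606488957/10100000000000000000000000000000000000000000000000000 : ℝ) := by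
    simp [av, dotProduct, Fin.sum_univ_four]; norm_num
  have cd26 : (![(26178271150132621044235192056768769762958074576970710016886880201683955443729/2020000000000000000000000000000000000000000000000000000 : ℝ), (-16252202181678360444546707848384409683409803835989845014148243115277778421671/2020000000000000000000000000000000000000000000000000000 : ℝ), (261870192805195474634656971644727216658720693716991972403762634208502345871/20200000000000000000000000000000000000000000000000000 : ℝ), (-4217301898307193037705567187527407187980573185993350459886859749136400071/202000000000000000000000000000000000000000000000000 : ℝ)] : Fin 4 → ℝ) ⬝ᵥ dv = (-794336950643392015379654493435875330656908989041224935423247384982485217633971/101000000000000000000000000000000000000000000000000000000 : ℝ) := by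
    simp [av, dv, dotProduct, Fin.sum_univ_four]; norm_num
  have cg26 : (![(26178271150132621044235192056768769762958074576970710016886880201683955443729/2020000000000000000000000000000000000000000000000000000 : ℝ), (-16252202181678360444546707848384409683409803835989845014148243115277778421671/2020000000000000000000000000000000000000000000000000000 : ℝ), (261870192805195474634656971644727216658720693716991972403762634208502345871/20200000000000000000000000000000000000000000000000000 : ℝ), (-4217301898307193037705567187527407187980573185993350459886859749136400071/202000000000000000000000000000000000000000000000000 : ℝ)] : Fin 4 → ℝ) ⬝ᵥ (1 : Fin 4 → ℝ) = (-3029965367049061156950745251208495067192695873626721177876848492053794550421/1010000000000000000000000000000000000000000000000000000 : ℝ) := by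
    simp [av, dotProduct, Fin.sum_univ_four]; norm_num
  have cd27 : (![(-20583921853411763289519964755783158802118016154802176514777303948519438712449887/202000000000000000000000000000000000000000000000000000000 : ℝ), (12777898606088329527968210095091107062960592935396136044352981724434353494885013/202000000000000000000000000000000000000000000000000000000 : ℝ), (-205878722228152366114434306531989559045461827738164718484702309870934742787613/2020000000000000000000000000000000000000000000000000000 : ℝ), (3315991717399902246527311227450625962764505992746986193143403752107347080213/20200000000000000000000000000000000000000000000000000 : ℝ)] : Fin 4 → ℝ) ⬝ᵥ dv = (624699235935527575810708203735019160285365146072966483912978165586957283559652563/10100000000000000000000000000000000000000000000000000000000 : ℝ) := by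
    simp [av, dv, dotProduct, Fin.sum_univ_four]; norm_num
  have cg27 : (![(-20583921853411763289519964755783158802118016154802176514777303948519438712449887/202000000000000000000000000000000000000000000000000000000 : ℝ), (12777898606088329527968210095091107062960592935396136044352981724434353494885013/202000000000000000000000000000000000000000000000000000000 : ℝ), (-205878722228152366114434306531989559045461827738164718484702309870934742787613/2020000000000000000000000000000000000000000000000000000 : ℝ), (3315991717399902246527311227450625962764505992746986193143403752107347080213/20200000000000000000000000000000000000000000000000000 : ℝ)] : Fin 4 → ℝ) ⬝ᵥ (1 : Fin 4 → ℝ) = (2383010851930176046138963480307625991970726967123674806269742154947455652901913/101000000000000000000000000000000000000000000000000000000 : ℝ) := by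
    simp [av, dotProduct, Fin.sum_univ_four]; norm_num
  have cd28 : (![(16184903473783471016306483003354175005335276873146018063407734352723431170511315761/20200000000000000000000000000000000000000000000000000000000 : ℝ), (-10046879833668292833830357085547553080712464505865682175872144647059440722685125039/20200000000000000000000000000000000000000000000000000000000 : ℝ), (161860929155156408252565214204467056616158875449087239223880331095863906157222839/202000000000000000000000000000000000000000000000000000000 : ℝ), (-2607231197124398446259689656066344254795089078862685871340149180877212476490639/2020000000000000000000000000000000000000000000000000000 : ℝ)] : Fin 4 → ℝ) ⬝ᵥ dv = (-491241940966359592775780694051933533354438756002266571606905140106454712235292209639/1010000000000000000000000000000000000000000000000000000000000 : ℝ) := by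
    simp [av, dv, dotProduct, Fin.sum_univ_four]; norm_num
  have cg28 : (![(16184903473783471016306483003354175005335276873146018063407734352723431170511315761/20200000000000000000000000000000000000000000000000000000000 : ℝ), (-10046879833668292833830357085547553080712464505865682175872144647059440722685125039/20200000000000000000000000000000000000000000000000000000000 : ℝ), (161860929155156408252565214204467056616158875449087239223880331095863906157222839/202000000000000000000000000000000000000000000000000000000 : ℝ), (-2607231197124398446259689656066344254795089078862685871340149180877212476490639/2020000000000000000000000000000000000000000000000000000 : ℝ)] : Fin 4 → ℝ) ⬝ᵥ (1 : Fin 4 → ℝ) = (-1874097707806582727432124611205057480856095438218899451738934496760871850678957689/10100000000000000000000000000000000000000000000000000000000 : ℝ) := by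
    simp [av, dotProduct, Fin.sum_univ_four]; norm_num
  have cd29 : (![(-12725719343929587056719933318215347791001856129151301087232991051506837074136845675583/2020000000000000000000000000000000000000000000000000000000000 : ℝ), (7899675631736534033542543097927161085056459807221107118311580133876039890126987615117/2020000000000000000000000000000000000000000000000000000000000 : ℝ), (-127257196994098723453030199779322893211832718787049390061944632598696665862389078517/20200000000000000000000000000000000000000000000000000000000 : ℝ), (2049921505740108292513509436253207722725530073664873240475730501813919204366051917/202000000000000000000000000000000000000000000000000000000 : ℝ)] : Fin 4 → ℝ) ⬝ᵥ dv = (386261746043464002480015024119845301950628744736224572943681382454660874279075636884767/101000000000000000000000000000000000000000000000000000000000000 : ℝ) := by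
    simp [av, dv, dotProduct, Fin.sum_univ_four]; norm_num
  have cg29 : (![(-12725719343929587056719933318215347791001856129151301087232991051506837074136845675583/2020000000000000000000000000000000000000000000000000000000000 : ℝ), (7899675631736534033542543097927161085056459807221107118311580133876039890126987615117/2020000000000000000000000000000000000000000000000000000000000 : ℝ), (-127257196994098723453030199779322893211832718787049390061944632598696665862389078517/20200000000000000000000000000000000000000000000000000000000 : ℝ), (2049921505740108292513509436253207722725530073664873240475730501813919204366051917/202000000000000000000000000000000000000000000000000000000 : ℝ)] : Fin 4 → ℝ) ⬝ᵥ (1 : Fin 4 → ℝ) = (1473725822899078778327342082155800600063316268006799714820715420319364136705876628917/1010000000000000000000000000000000000000000000000000000000000 : ℝ) := by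
    simp [av, dotProduct, Fin.sum_univ_four]; norm_num
  constructor
  · simp only [Finset.sum_range_succ, Finset.sum_range_zero, h0, h1, h2, h3, h4, h5, h6, h7, h8, h9, h10, h11, h12, h13, h14, h15, h16, h17, h18, h19, h20, h21, h22, h23, h24, h25, h26, h27, h28, h29, cd0, cd1, cd2, cd3, cd4, cd5, cd6, cd7, cd8, cd9, cd10, cd11, cd12, cd13, cd14, cd15, cd16, cd17, cd18, cd19, cd20, cd21, cd22, cd23, cd24, cd25, cd26, cd27, cd28, cd29]
    norm_num [Nat.factorial]
  · simp only [Finset.sum_range_succ, Finset.sum_range_zero, h0, h1, h2, h3, h4, h5, h6, h7, h8, h9, h10, h11, h12, h13, h14, h15, h16, h17, h18, h19, h20, h21, h22, h23, h24, h25, h26, h27, h28, h29, cg0, cg1, cg2, cg3, cg4, cg5, cg6, cg7, cg8, cg9, cg10, cg11, cg12, cg13, cg14, cg15, cg16, cg17, cg18, cg19, cg20, cg21, cg22, cg23, cg24, cg25, cg26, cg27, cg28, cg29]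
    norm_num [Nat.factorial]

end Stmt14

open Stmt14 in
/-- Telek–Horváth counter-example: For the 4-state MMPP with cyclic
generator `Q`, `D = diag(1/100, 1/100, 1, 1)` and `C = Q − D`, the matrix `C` is
invertible, and for every probability vector `α` with `α·(−C)⁻¹·D = α`, the hazard rate
`h(t) = (α·e^{tC}·D·𝟏)/(α·e^{tC}·𝟏)` is not non-increasing on `[0, ∞)`: there exist
`0 ≤ t₁ < t₂` with `h(t₁) < h(t₂)`. -/
theorem stmt_14
    (Q : Matrix (Fin 4) (Fin 4) ℝ)
    (hQ : Q = !![-1, 1, 0, 0; 0, -1, 1, 0; 0, 0, -1, 1; 1, 0, 0, -1])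
    (D : Matrix (Fin 4) (Fin 4) ℝ)
    (hD : D = Matrix.diagonal ![1/100, 1/100, 1, 1])
    (C : Matrix (Fin 4) (Fin 4) ℝ) (hC : C = Q - D) :
    IsUnit C.det ∧
      ∀ α : Fin 4 → ℝ, (∀ i, 0 ≤ α i) → (∑ i, α i = 1) →
        α ᵥ* ((-C)⁻¹ * D) = α →
        ∃ t₁ t₂ : ℝ, 0 ≤ t₁ ∧ t₁ < t₂ ∧
          ((α ᵥ* (NormedSpace.exp (t₁ • C) * D)) ⬝ᵥ (1 : Fin 4 → ℝ)) /
              ((α ᵥ* NormedSpace.exp (t₁ • C)) ⬝ᵥ (1 : Fin 4 → ℝ)) <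
            ((α ᵥ* (NormedSpace.exp (t₂ • C) * D)) ⬝ᵥ (1 : Fin 4 → ℝ)) /
              ((α ᵥ* NormedSpace.exp (t₂ • C)) ⬝ᵥ (1 : Fin 4 → ℝ)) := by
  have hCm : C = Cmat := by
    rw [hC, hQ, hD]; ext i j
    fin_cases i <;> fin_cases j <;>
      simp [Cmat, Matrix.diagonal, Matrix.sub_apply, Matrix.vecHead, Matrix.vecTail] <;> norm_num
  refine ⟨?_, ?_⟩
  · have hdet : C.det = (7701/2500 : ℝ) := by
      rw [hCm]; simp [Cmat, Matrix.det_succ_row_zero, Fin.sum_univ_succ, Fin.succAbove, Matrix.vecHead, Matrix.vecTail]; norm_num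
    rw [hdet]; exact isUnit_iff_ne_zero.2 (by norm_num)
  intro α hpos hsum1 hfix
  have hNC : (-Cmat) * Ninv = 1 := by
    ext i j
    fin_cases i <;> fin_cases j <;>
      simp [Cmat, Ninv, Matrix.mul_apply, Fin.sum_univ_four, Matrix.one_apply, Matrix.vecHead, Matrix.vecTail] <;>
      norm_num
  have hinv : (-C)⁻¹ = Ninv := by rw [hCm]; exact Matrix.inv_eq_right_inv hNC
  have hPm : (-C)⁻¹ * D = Pmat := by
    rw [hinv, hD]; ext i j
    fin_cases i <;> fin_cases j <;>
      simp [Ninv, Pmat, Matrix.mul_apply, Fin.sum_univ_four, Matrix.diagonal, Matrix.vecHead, Matrix.vecTail] <;>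
      norm_num
  rw [hPm] at hfix
  have e0 := congrFun hfix 0
  have e1 := congrFun hfix 1
  have e2 := congrFun hfix 2
  have e3 := congrFun hfix 3
  simp [Pmat, Matrix.vecMul, dotProduct, Fin.sum_univ_four, Matrix.vecHead, Matrix.vecTail] at e0 e1 e2 e3
  have hsum4 : α 0 + α 1 + α 2 + α 3 = 1 := by rw [Fin.sum_univ_four] at hsum1; exact hsum1
  have hav : α = av := by
    funext i
    fin_cases i <;> simp [av] <;> linarith
  subst hav
  refine ⟨2, 3, by norm_num, by norm_num, ?_⟩
  have h2C : (2:ℝ) • C = A2mat := by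
    rw [hCm]; ext i j
    fin_cases i <;> fin_cases j <;> simp [Cmat, A2mat, Matrix.smul_apply, Matrix.vecHead, Matrix.vecTail] <;> norm_num
  have h3C : (3:ℝ) • C = A3mat := by
    rw [hCm]; ext i j
    fin_cases i <;> fin_cases j <;> simp [Cmat, A3mat, Matrix.smul_apply, Matrix.vecHead, Matrix.vecTail] <;> norm_num
  rw [h2C, h3C]
  have hdv : D *ᵥ (1 : Fin 4 → ℝ) = dv := by
    rw [hD]; funext i
    fin_cases i <;>
      simp [dv, Matrix.mulVec, dotProduct, Fin.sum_univ_four, Matrix.diagonal, Matrix.vecHead, Matrix.vecTail] <;>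
      norm_num
  rw [show (av ᵥ* (NormedSpace.exp A2mat * D)) ⬝ᵥ (1 : Fin 4 → ℝ)
        = (av ᵥ* NormedSpace.exp A2mat) ⬝ᵥ dv by
      rw [← Matrix.vecMul_vecMul, ← Matrix.dotProduct_mulVec, hdv],
    show (av ᵥ* (NormedSpace.exp A3mat * D)) ⬝ᵥ (1 : Fin 4 → ℝ)
        = (av ᵥ* NormedSpace.exp A3mat) ⬝ᵥ dv by
      rw [← Matrix.vecMul_vecMul, ← Matrix.dotProduct_mulVec, hdv]]
  have hydv : ∀ j, |dv j| ≤ 1 := by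
    intro j; fin_cases j <;> simp [dv, abs_le] <;> norm_num
  have hyone : ∀ j : Fin 4, |(1 : Fin 4 → ℝ) j| ≤ 1 := by intro j; simp
  have hrows2 : ∀ i, ∑ j, |A2mat i j| ≤ 6 := by
    intro i
    fin_cases i <;> simp [A2mat, Fin.sum_univ_four, Matrix.vecHead, Matrix.vecTail] <;> norm_num [abs_of_pos]
  have hrows3 : ∀ i, ∑ j, |A3mat i j| ≤ 9 := by
    intro i
    fin_cases i <;> simp [A3mat, Fin.sum_univ_four, Matrix.vecHead, Matrix.vecTail] <;> norm_num [abs_of_pos]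
  have b2d := Stmt14.dot_exp_bounds' A2mat av dv hpos hsum1 hydv 6 (by norm_num) hrows2 22
    (by norm_num) (1/6000) (by norm_num [Nat.factorial])
  have b2g := Stmt14.dot_exp_bounds' A2mat av (1 : Fin 4 → ℝ) hpos hsum1 hyone 6 (by norm_num)
    hrows2 22 (by norm_num) (1/6000) (by norm_num [Nat.factorial])
  have b3d := Stmt14.dot_exp_bounds' A3mat av dv hpos hsum1 hydv 9 (by norm_num) hrows3 30
    (by norm_num) (1/4000) (by norm_num [Nat.factorial])
  have b3g := Stmt14.dot_exp_bounds' A3mat av (1 : Fin 4 → ℝ) hpos hsum1 hyone 9 (by norm_num)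
    hrows3 30 (by norm_num) (1/4000) (by norm_num [Nat.factorial])
  rw [sums2.1] at b2d
  rw [sums2.2] at b2g
  rw [sums3.1] at b3d
  rw [sums3.2] at b3g
  obtain ⟨l1, u1⟩ := b2d
  obtain ⟨l1g, u1g⟩ := b2g
  obtain ⟨l2, u2⟩ := b3d
  obtain ⟨l2g, u2g⟩ := b3g
  have hd1 : (0:ℝ) < (817950600137477671345237719295418520639474993025846957549/2460568027182890625000000000000000000000000000000000000000 : ℝ) - 1/6000 := by norm_num
  have hd2 : (0:ℝ) < (1321104206045629758808902721942007833751032364198880926814913724698927944523510209179/5601236144543545425920000000000000000000000000000000000000000000000000000000000000000 : ℝ) - 1/4000 := by norm_num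
  have hnum2 : (0:ℝ) ≤ (2054333063798171592132299315927543079326832799889358499029201053176762345559002821223/24353200628450197504000000000000000000000000000000000000000000000000000000000000000000 : ℝ) - 1/4000 := by norm_num
  calc (av ᵥ* NormedSpace.exp A2mat) ⬝ᵥ dv / ((av ᵥ* NormedSpace.exp A2mat) ⬝ᵥ (1 : Fin 4 → ℝ))
      ≤ ((27420546488829159366251410759402164838740195927480265009999/246056802718289062500000000000000000000000000000000000000000 : ℝ) + 1/6000) / ((817950600137477671345237719295418520639474993025846957549/2460568027182890625000000000000000000000000000000000000000 : ℝ) - 1/6000) :=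
        div_le_div₀ (by norm_num) u1 hd1 l1g
    _ < ((2054333063798171592132299315927543079326832799889358499029201053176762345559002821223/24353200628450197504000000000000000000000000000000000000000000000000000000000000000000 : ℝ) - 1/4000) / ((1321104206045629758808902721942007833751032364198880926814913724698927944523510209179/5601236144543545425920000000000000000000000000000000000000000000000000000000000000000 : ℝ) + 1/4000) := by
        rw [div_lt_div_iff₀ hd1 (by norm_num)]
        norm_num
    _ ≤ (av ᵥ* NormedSpace.exp A3mat) ⬝ᵥ dv / ((av ᵥ* NormedSpace.exp A3mat) ⬝ᵥ (1 : Fin 4 → ℝ)) := by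
        apply div_le_div₀ (by linarith) l2 (by linarith) u2g
end

section
/- Let Q be a symmetric real p×p matrix with nonnegative off-diagonal entries and Q·𝟏 = 0, and let D = diag(λ₁,…,λ_p) with λᵢ ≥ 0 and Σᵢ λᵢ > 0. Set C = Q − D, let π be the uniform probability vector πᵢ = 1/p, and let αᵢ = λᵢ/(Σⱼ λⱼ). Then for all t ≥ 0, using the matrix exponential exp(tC): (π − α)·exp(tC)·𝟏 ≥ 0. -/
open Matrix

attribute [local instance] Matrix.linftyOpNormedRing Matrix.linftyOpNormedAlgebra

/-- For an MMPP with symmetric generator `Q` (nonnegative off-diagonal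
entries, `Q·𝟏 = 0`) and `D = diag(λ)` with `λᵢ ≥ 0`, `Σᵢ λᵢ > 0`, `C = Q − D`,
uniform `π` and `αᵢ = λᵢ/Σⱼλⱼ`: for all `t ≥ 0`, `(π − α)·e^{tC}·𝟏 ≥ 0`. -/
theorem stmt_15 {p : ℕ} (hp : 0 < p)
    (Q : Matrix (Fin p) (Fin p) ℝ) (hQsymm : Q.IsSymm)
    (hQoff : ∀ i j, i ≠ j → 0 ≤ Q i j)
    (hQ1 : Q *ᵥ (1 : Fin p → ℝ) = 0)
    (lam : Fin p → ℝ) (hlam_nonneg : ∀ i, 0 ≤ lam i) (hlam_pos : 0 < ∑ i, lam i)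
    (C : Matrix (Fin p) (Fin p) ℝ) (hC : C = Q - Matrix.diagonal lam)
    (π : Fin p → ℝ) (hπ : π = fun _ => (1 : ℝ) / p)
    (α : Fin p → ℝ) (hα : α = fun i => lam i / ∑ j, lam j) :
    ∀ t : ℝ, 0 ≤ t →
      0 ≤ ((π - α) ᵥ* NormedSpace.exp (t • C)) ⬝ᵥ (1 : Fin p → ℝ) := by
  intro t ht
  have hpR : (0 : ℝ) < (p : ℝ) := by exact_mod_cast hp
  set Λ : ℝ := ∑ i, lam i with hΛ
  set A : Matrix (Fin p) (Fin p) ℝ := C + (Λ / p) • 1 with hA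
  have hCsymm : C.IsSymm := by
    rw [Matrix.IsSymm, hC, Matrix.transpose_sub, hQsymm, Matrix.diagonal_transpose]
  have hAsymm : A.IsSymm := by
    rw [Matrix.IsSymm, hA, Matrix.transpose_add, hCsymm, Matrix.transpose_smul,
      Matrix.transpose_one]
  have hC1 : C *ᵥ (1 : Fin p → ℝ) = -lam := by
    rw [hC, Matrix.sub_mulVec, hQ1]
    ext i
    simp [Matrix.mulVec_diagonal]
  set v : Fin p → ℝ := A *ᵥ (1 : Fin p → ℝ) with hv
  have hv_eq : v = fun i => Λ / p - lam i := by
    rw [hv, hA, Matrix.add_mulVec, hC1, Matrix.smul_mulVec, Matrix.one_mulVec]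
    ext i
    simp only [Pi.add_apply, Pi.neg_apply, Pi.smul_apply, Pi.one_apply, smul_eq_mul]
    ring
  have hv1 : v ⬝ᵥ (1 : Fin p → ℝ) = 0 := by
    rw [hv_eq]
    simp only [dotProduct, Pi.one_apply, mul_one, Finset.sum_sub_distrib,
      Finset.sum_const, Finset.card_univ, Fintype.card_fin, nsmul_eq_mul]
    field_simp
    exact sub_eq_zero.mpr hΛ
  have hsymm_smul : ∀ s : ℝ, (s • A).IsSymm := fun s => by
    rw [Matrix.IsSymm, Matrix.transpose_smul, hAsymm]
  have hPSD : ∀ (s : ℝ) (x : Fin p → ℝ),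
      0 ≤ x ⬝ᵥ (NormedSpace.exp (s • A) *ᵥ x) := by
    intro s x
    have hsplit : s • A = (s / 2) • A + (s / 2) • A := by
      rw [← add_smul]; ring_nf
    rw [hsplit, Matrix.exp_add_of_commute _ _ (Commute.refl _)]
    set B := NormedSpace.exp ((s / 2) • A) with hB
    have hBsymm : B.IsSymm := (hsymm_smul (s / 2)).exp
    rw [← Matrix.mulVec_mulVec, Matrix.dotProduct_mulVec, ← Matrix.mulVec_transpose, hBsymm]
    exact Finset.sum_nonneg fun i _ => mul_self_nonneg _
  -- the linear functional M ↦ v ⬝ᵥ (M *ᵥ 1)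
  set L : Matrix (Fin p) (Fin p) ℝ →ₗ[ℝ] ℝ :=
    { toFun := fun M => v ⬝ᵥ (M *ᵥ (1 : Fin p → ℝ))
      map_add' := fun M N => by simp [Matrix.add_mulVec, dotProduct_add]
      map_smul' := fun c M => by
        simp [Matrix.smul_mulVec, dotProduct_smul] } with hL
  set F : ℝ → ℝ := fun s => v ⬝ᵥ (NormedSpace.exp (s • A) *ᵥ (1 : Fin p → ℝ)) with hF
  have hF' : ∀ s : ℝ, HasDerivAt F (v ⬝ᵥ (NormedSpace.exp (s • A) *ᵥ v)) s := by
    intro s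
    have hd := hasDerivAt_exp_smul_const (𝕂 := ℝ) A s
    have hcomp := (L.toContinuousLinearMap.hasFDerivAt.comp_hasDerivAt s hd)
    have : L (NormedSpace.exp (s • A) * A) = v ⬝ᵥ (NormedSpace.exp (s • A) *ᵥ v) := by
      simp [hL, ← Matrix.mulVec_mulVec, hv]
    rw [← this]
    exact hcomp
  have hFmono : Monotone F :=
    monotone_of_hasDerivAt_nonneg hF' fun s => hPSD s v
  have hF0 : F 0 = 0 := by
    simp [hF, zero_smul, NormedSpace.exp_zero, Matrix.one_mulVec, hv1]
  have hFt : 0 ≤ F t := hF0 ▸ hFmono ht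
  -- decompose exp (t • A)
  have hcomm : Commute (t • C) ((t * (Λ / p)) • (1 : Matrix (Fin p) (Fin p) ℝ)) := by
    exact (Commute.one_right (t • C)).smul_right _
  have hsum : t • A = t • C + (t * (Λ / p)) • (1 : Matrix (Fin p) (Fin p) ℝ) := by
    rw [hA, smul_add, smul_smul]
  have hexp1 : NormedSpace.exp ((t * (Λ / p)) • (1 : Matrix (Fin p) (Fin p) ℝ))
      = Real.exp (t * (Λ / p)) • (1 : Matrix (Fin p) (Fin p) ℝ) := by
    rw [← Algebra.algebraMap_eq_smul_one]
    erw [← NormedSpace.algebraMap_exp_comm]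
    rw [Algebra.algebraMap_eq_smul_one, Real.exp_eq_exp_ℝ]
  have hexpA : NormedSpace.exp (t • A)
      = Real.exp (t * (Λ / p)) • NormedSpace.exp (t • C) := by
    rw [hsum, Matrix.exp_add_of_commute _ _ hcomm, hexp1, mul_smul_one]
  have hFt' : F t = Real.exp (t * (Λ / p)) * (v ⬝ᵥ (NormedSpace.exp (t • C) *ᵥ (1 : Fin p → ℝ))) := by
    rw [hF]
    simp only [hexpA, Matrix.smul_mulVec, dotProduct_smul, smul_eq_mul]
  have hkey : 0 ≤ v ⬝ᵥ (NormedSpace.exp (t • C) *ᵥ (1 : Fin p → ℝ)) := by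
    have hepos : 0 < Real.exp (t * (Λ / p)) := Real.exp_pos _
    nlinarith [hFt, hFt']
  -- relate v to π - α
  have hvπα : π - α = Λ⁻¹ • v := by
    rw [hπ, hα, hv_eq]
    ext i
    have hΛ0 : Λ ≠ 0 := ne_of_gt hlam_pos
    have hp0 : (p : ℝ) ≠ 0 := ne_of_gt hpR
    simp only [Pi.sub_apply, Pi.smul_apply, smul_eq_mul]
    have h1 : Λ⁻¹ * (Λ / ↑p) = 1 / ↑p := by field_simp
    have h2 : Λ⁻¹ * lam i = lam i / Λ := by rw [inv_mul_eq_div]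
    rw [mul_sub, h1, h2]
  rw [← Matrix.dotProduct_mulVec, hvπα, smul_dotProduct]
  have hΛinv : 0 ≤ Λ⁻¹ := inv_nonneg.mpr (le_of_lt hlam_pos)
  exact smul_nonneg hΛinv hkey
end
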